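/- arXiv:2008.06740 — 4 statements merged into one kernel-verified Lean document; each statement's English description precedes it below -/
import Mathlib

section
/- Let C be a shortest even hole of a graph G, let u and v be distinct vertices of C, let the uv-path P of G be a C-shallow worst C-shortcut, and let C1, C2 be the uv-paths of C with ‖C1‖ ≤ ‖C2‖. Let x (respectively, y) be the neighbor of u (respectively, v) in C1. Let P_uv be a shortest uv-path of G and P_xy a shortest xy-path of G. Then the interior (the set of non-end vertices) of C2 is disjoint from N_G[V(P_uv ∪ P_xy) \ {u,v}]; consequently, C2 is contained in H(u,v,x,y) = G[(V(G) \ N_G[V(P_uv ∪ P_xy) \ {u,v}]) ∪ {u,v}], the vertices u and v are connected in H(u,v,x,y), and every shortest uv-path Q of H(u,v,x,y) satisfies ‖Q‖ ≤ ‖C2‖. -/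
open SimpleGraph

variable {V : Type*}

/-- The vertex set of a walk. -/
def suppSet {G : SimpleGraph V} {u v : V} (w : G.Walk u v) : Set V :=
  {x | x ∈ w.support}

/-- An induced cycle of `G`. -/
def IsInducedCycle (G : SimpleGraph V) {r : V} (w : G.Walk r r) : Prop :=
  w.IsCycle ∧ ∀ a b : V, a ∈ w.support → b ∈ w.support → G.Adj a b → s(a, b) ∈ w.edges

/-- A hole of `G`: an induced cycle with at least 4 vertices. -/
def IsHole (G : SimpleGraph V) {r : V} (w : G.Walk r r) : Prop :=
  IsInducedCycle G w ∧ 4 ≤ w.length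

/-- An even hole of `G`. -/
def IsEvenHole (G : SimpleGraph V) {r : V} (w : G.Walk r r) : Prop :=
  IsHole G w ∧ Even w.length

/-- A shortest even hole of `G`. -/
def IsShortestEvenHole (G : SimpleGraph V) {r : V} (w : G.Walk r r) : Prop :=
  IsEvenHole G w ∧ ∀ (y : V) (w' : G.Walk y y), IsEvenHole G w' → w.length ≤ w'.length

/-- `P` is a path of `G` all of whose edges lie on the walk `c`
(used for "a `uv`-path of `C`"). -/
def IsPathOf (G : SimpleGraph V) {p q u v : V} (c : G.Walk p q) (P : G.Walk u v) : Prop :=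
  P.IsPath ∧ ∀ e ∈ P.edges, e ∈ c.edges

/-- The distance `d_C(u,v)` between `u` and `v` within the cycle `c`. -/
noncomputable def cycleDist (G : SimpleGraph V) {r : V} (c : G.Walk r r) (u v : V) : ℕ :=
  sInf {n | ∃ P : G.Walk u v, IsPathOf G c P ∧ P.length = n}

/-- The induced subgraph `G[S]` is a hole of `G`. -/
def IsHoleOn (G : SimpleGraph V) (S : Set V) : Prop :=
  ∃ (r : V) (w : G.Walk r r), IsHole G w ∧ suppSet w = S

/-- The induced subgraph `G[S]` is an even hole of `G`. -/
def IsEvenHoleOn (G : SimpleGraph V) (S : Set V) : Prop :=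
  ∃ (r : V) (w : G.Walk r r), IsEvenHole G w ∧ suppSet w = S

/-- The induced subgraph `G[S]` is a shortest even hole of `G`. -/
def IsShortestEvenHoleOn (G : SimpleGraph V) (S : Set V) : Prop :=
  ∃ (r : V) (w : G.Walk r r), IsShortestEvenHole G w ∧ suppSet w = S

/-- `P` is `C`-good: the union of `P` and one of the two `uv`-paths of `C`
is again a shortest even hole of `G`. -/
def CGood (G : SimpleGraph V) {r u v : V} (c : G.Walk r r) (P : G.Walk u v) : Prop :=
  ∃ Q : G.Walk u v, IsPathOf G c Q ∧ IsShortestEvenHoleOn G (suppSet P ∪ suppSet Q)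

/-- The standing assumptions for `C`-shortcuts: `P` is a `uv`-path of `G` for distinct
nonadjacent vertices `u`, `v` of `C`. -/
def ShortcutSetup (G : SimpleGraph V) {r u v : V} (c : G.Walk r r) (P : G.Walk u v) : Prop :=
  P.IsPath ∧ u ≠ v ∧ ¬G.Adj u v ∧ u ∈ c.support ∧ v ∈ c.support

/-- `P` is a `C`-shortcut: `2 ≤ ‖P‖ ≤ d_C(u,v)` and `‖P‖ < ‖C‖/4`. -/
def CShortcut (G : SimpleGraph V) {r u v : V} (c : G.Walk r r) (P : G.Walk u v) : Prop :=
  2 ≤ P.length ∧ P.length ≤ cycleDist G c u v ∧ 4 * P.length < c.length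

/-- `C1` and `C2` are the two `uv`-paths of the cycle `c`. -/
def ArcPair (G : SimpleGraph V) {r u v : V} (c : G.Walk r r) (C1 C2 : G.Walk u v) : Prop :=
  IsPathOf G c C1 ∧ IsPathOf G c C2 ∧ C1.length + C2.length = c.length ∧
    ∀ e ∈ c.edges, e ∈ C1.edges ∨ e ∈ C2.edges

/-- `P` is `C`-shallow: `‖P‖ ≥ d_C(u,v) − 1` and `G[P ∪ C2]` is a hole, where `C2` is the
longer of the two `uv`-paths of `C`. -/
def CShallow (G : SimpleGraph V) {r u v : V} (c : G.Walk r r) (P : G.Walk u v) : Prop :=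
  cycleDist G c u v - 1 ≤ P.length ∧
    ∀ C1 C2 : G.Walk u v, ArcPair G c C1 C2 → C1.length ≤ C2.length →
      IsHoleOn G (suppSet P ∪ suppSet C2)

/-- `P` is a worst `C`-shortcut. -/
def WorstCShortcut (G : SimpleGraph V) {r u v : V} (c : G.Walk r r) (P : G.Walk u v) : Prop :=
  ShortcutSetup G c P ∧ CShortcut G c P ∧ ¬CGood G c P ∧
    ∀ (u' v' : V) (P' : G.Walk u' v'),
      ShortcutSetup G c P' → CShortcut G c P' → ¬CGood G c P' →
        (P.length < P'.length ∨
          (P.length = P'.length ∧ cycleDist G c u' v' ≤ cycleDist G c u v))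

/-- `C` is good in `G`: every `C`-shortcut is `C`-good. -/
def GoodHole (G : SimpleGraph V) {r : V} (c : G.Walk r r) : Prop :=
  ∀ (u v : V) (P : G.Walk u v), ShortcutSetup G c P → CShortcut G c P → CGood G c P

/-- `P` is a shortest `uv`-path of `G`. -/
def IsShortestPath (G : SimpleGraph V) {u v : V} (P : G.Walk u v) : Prop :=
  P.IsPath ∧ ∀ Q : G.Walk u v, P.length ≤ Q.length

/-- The closed neighborhood `N_G[S]` of a vertex set `S`. -/
def closedNbhd (G : SimpleGraph V) (S : Set V) : Set V :=
  S ∪ {x | ∃ y ∈ S, G.Adj y x}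

/-- The subgraph of `G` induced on `S` (kept on the same vertex type: edges of `G`
with both ends in `S`). -/
def restrictTo (G : SimpleGraph V) (S : Set V) : SimpleGraph V where
  Adj a b := G.Adj a b ∧ a ∈ S ∧ b ∈ S
  symm := ⟨fun a b h => ⟨h.1.symm, h.2.2, h.2.1⟩⟩
  loopless := ⟨fun a h => G.loopless.irrefl a h.1⟩

/-- The vertex set of `H(u,v,x,y) = G[(V(G) \ N_G[V(P_uv ∪ P_xy) \ {u,v}]) ∪ {u,v}]`. -/
def Hverts (G : SimpleGraph V) {u v a b : V} (Puv : G.Walk u v) (Pxy : G.Walk a b) : Set V :=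
  (Set.univ \ closedNbhd G ((suppSet Puv ∪ suppSet Pxy) \ {u, v})) ∪ {u, v}

/-- The graph `H(u,v,x,y)`. -/
def Hgraph (G : SimpleGraph V) {u v a b : V} (Puv : G.Walk u v) (Pxy : G.Walk a b) :
    SimpleGraph V :=
  restrictTo G (Hverts G Puv Pxy)

/-- `G` is shallow. -/
def ShallowGraph (G : SimpleGraph V) : Prop :=
  ∃ (r : V) (c : G.Walk r r), IsShortestEvenHole G c ∧
    ∀ (u v : V) (P : G.Walk u v), WorstCShortcut G c P → CShallow G c P

/-- `G` is anti-shallow. -/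
def AntiShallowGraph (G : SimpleGraph V) : Prop :=
  ∀ (r : V) (c : G.Walk r r), IsShortestEvenHole G c → ¬GoodHole G c →
    ∀ (u v : V) (P : G.Walk u v), WorstCShortcut G c P → ¬CShallow G c P

/-- The induced subgraph `G[S]` is a path with end-vertices `u` and `v`. -/
def IsInducedPathOn (G : SimpleGraph V) (u v : V) (S : Set V) : Prop :=
  ∃ Q : G.Walk u v, Q.IsPath ∧ suppSet Q = S ∧
    ∀ a b : V, a ∈ S → b ∈ S → G.Adj a b → s(a, b) ∈ Q.edges

section StmtAuxSec

variable {G : SimpleGraph V}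

lemma support_eq_map_getVert {u v : V} (p : G.Walk u v) :
    p.support = (List.range (p.length + 1)).map p.getVert := by
  induction p with
  | nil => simp [SimpleGraph.Walk.getVert]
  | @cons a b w h q ih =>
    rw [SimpleGraph.Walk.support_cons, SimpleGraph.Walk.length_cons, ih]
    rw [List.range_succ_eq_map (n := q.length + 1), List.map_cons, List.map_map]
    have h0 : (SimpleGraph.Walk.cons h q).getVert 0 = a := SimpleGraph.Walk.getVert_zero _
    rw [h0]
    have hmap : List.map ((SimpleGraph.Walk.cons h q).getVert ∘ Nat.succ)
        (List.range (q.length + 1)) = List.map q.getVert (List.range (q.length + 1)) := by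
      apply List.map_congr_left
      intro k _
      simp [SimpleGraph.Walk.getVert_cons_succ]
    rw [hmap]

lemma mem_support_iff_getVert {u v w : V} (p : G.Walk u v) :
    w ∈ p.support ↔ ∃ k ≤ p.length, p.getVert k = w := by
  rw [support_eq_map_getVert]
  simp only [List.mem_map, List.mem_range]
  constructor
  · rintro ⟨k, hk, rfl⟩; exact ⟨k, by omega, rfl⟩
  · rintro ⟨k, hk, rfl⟩; exact ⟨k, by omega, rfl⟩

lemma edge_mem_iff_getVert {u v : V} (p : G.Walk u v) (e : Sym2 V) :
    e ∈ p.edges ↔ ∃ i < p.length, s(p.getVert i, p.getVert (i + 1)) = e := by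
  constructor
  · intro he
    induction e with
    | _ a b =>
      have : p.toSubgraph.Adj a b := by
        rw [← SimpleGraph.Subgraph.mem_edgeSet, SimpleGraph.Walk.edgeSet_toSubgraph]
        exact he
      obtain ⟨i, hi1, hi2⟩ := (SimpleGraph.Walk.toSubgraph_adj_iff _).mp this
      exact ⟨i, hi2, hi1⟩
  · rintro ⟨i, hi, rfl⟩
    have : p.toSubgraph.Adj (p.getVert i) (p.getVert (i + 1)) :=
      SimpleGraph.Walk.toSubgraph_adj_getVert _ hi
    rw [← SimpleGraph.Subgraph.mem_edgeSet, SimpleGraph.Walk.edgeSet_toSubgraph] at this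
    exact this

lemma consec_edge_mem {u v : V} (p : G.Walk u v) {i : ℕ} (hi : i < p.length) :
    s(p.getVert i, p.getVert (i + 1)) ∈ p.edges :=
  (edge_mem_iff_getVert p _).mpr ⟨i, hi, rfl⟩

/-- injectivity of getVert on a path -/
lemma path_getVert_inj {u v : V} {p : G.Walk u v} (hp : p.IsPath) {i j : ℕ}
    (hi : i ≤ p.length) (hj : j ≤ p.length) (h : p.getVert i = p.getVert j) : i = j := by
  have hnd := hp.support_nodup
  rw [support_eq_map_getVert] at hnd
  have hinj := List.inj_on_of_nodup_map hnd
  have hi' : i ∈ List.range (p.length + 1) := by rw [List.mem_range]; omega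
  have hj' : j ∈ List.range (p.length + 1) := by rw [List.mem_range]; omega
  exact hinj hi' hj' h

/-- injectivity of getVert on a cycle, for indices < length -/
lemma cycle_getVert_inj {r : V} {c : G.Walk r r} (hc : c.IsCycle) {i j : ℕ}
    (hi : i < c.length) (hj : j < c.length) (h : c.getVert i = c.getVert j) : i = j := by
  have hnd : c.support.tail.Nodup := hc.2
  have hsup := support_eq_map_getVert c
  have htail : c.support.tail = (List.range c.length).map (fun k => c.getVert (k + 1)) := by
    rw [hsup, List.range_succ_eq_map]
    simp [Function.comp]
  rw [htail] at hnd
  have hinj := List.inj_on_of_nodup_map hnd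
  -- getVert injective on [1, n]
  have key : ∀ a b : ℕ, 1 ≤ a → a ≤ c.length → 1 ≤ b → b ≤ c.length →
      c.getVert a = c.getVert b → a = b := by
    intro a b ha1 ha2 hb1 hb2 hab
    have ha' : a - 1 ∈ List.range c.length := by rw [List.mem_range]; omega
    have hb' : b - 1 ∈ List.range c.length := by rw [List.mem_range]; omega
    have := hinj ha' hb'
    have h1 : a - 1 + 1 = a := by omega
    have h2 : b - 1 + 1 = b := by omega
    rw [h1, h2] at this
    have := this hab
    omega
  rcases Nat.eq_zero_or_pos i with rfl | hi1
  · rcases Nat.eq_zero_or_pos j with rfl | hj1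
    · rfl
    · rw [SimpleGraph.Walk.getVert_zero] at h
      have : c.getVert c.length = c.getVert j := by
        rw [SimpleGraph.Walk.getVert_length, ← h]
      have := key c.length j (by have := hc.three_le_length; omega) le_rfl hj1 (by omega) this
      omega
  · rcases Nat.eq_zero_or_pos j with rfl | hj1
    · rw [SimpleGraph.Walk.getVert_zero] at h
      have : c.getVert i = c.getVert c.length := by
        rw [SimpleGraph.Walk.getVert_length, h]
      have := key i c.length hi1 (by omega) (by have := hc.three_le_length; omega) le_rfl this
      omega
    · exact key i j hi1 (by omega) hj1 (by omega) h

/-- the end of a nonnil walk is in the tail of the support -/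
lemma end_mem_support_tail {u v : V} (p : G.Walk u v) (h : 1 ≤ p.length) :
    v ∈ p.support.tail := by
  have hsup := support_eq_map_getVert p
  have htail : p.support.tail = (List.range p.length).map (fun k => p.getVert (k + 1)) := by
    rw [hsup, List.range_succ_eq_map]
    simp [Function.comp]
  rw [htail]
  refine List.mem_map.mpr ⟨p.length - 1, ?_, ?_⟩
  · rw [List.mem_range]; omega
  · rw [Nat.sub_add_cancel h, SimpleGraph.Walk.getVert_length]

lemma cycle_support_toFinset_card [DecidableEq V] {r : V} {c : G.Walk r r} (hc : c.IsCycle) :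
    c.support.toFinset.card = c.length := by
  have h3 := hc.three_le_length
  have hr : r ∈ c.support.tail := end_mem_support_tail c (by omega)
  have hnd : c.support.tail.Nodup := hc.2
  have hcons := c.support_eq_cons
  have : c.support.toFinset = c.support.tail.toFinset := by
    rw [hcons]
    simp only [List.toFinset_cons]
    exact Finset.insert_eq_self.mpr (List.mem_toFinset.mpr hr)
  rw [this, List.toFinset_card_of_nodup hnd]
  have hls := SimpleGraph.Walk.length_support c
  rw [hcons] at hls
  simp only [List.length_cons] at hls
  omega

lemma path_support_toFinset_card [DecidableEq V] {u v : V} {p : G.Walk u v} (hp : p.IsPath) :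
    p.support.toFinset.card = p.length + 1 := by
  rw [List.toFinset_card_of_nodup hp.support_nodup, SimpleGraph.Walk.length_support]

/-- every vertex of a non-trivial walk lies on one of its edges -/
lemma mem_edge_of_mem_support {u v w : V} (p : G.Walk u v) (h : 1 ≤ p.length)
    (hw : w ∈ p.support) : ∃ e ∈ p.edges, w ∈ e := by
  obtain ⟨k, hk, rfl⟩ := (mem_support_iff_getVert p).mp hw
  rcases Nat.lt_or_ge k p.length with hlt | hge
  · exact ⟨s(p.getVert k, p.getVert (k + 1)), consec_edge_mem p hlt, by simp⟩
  · have hk' : k = p.length := by omega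
    refine ⟨s(p.getVert (k - 1), p.getVert k), ?_, by simp⟩
    have h1 : k - 1 + 1 = k := by omega
    have h2 := consec_edge_mem p (i := k - 1) (by omega)
    rwa [h1] at h2

lemma adj_of_length_one {u v : V} {p : G.Walk u v} (h : p.length = 1) : G.Adj u v := by
  cases p with
  | nil => simp at h
  | cons hadj q =>
    simp only [SimpleGraph.Walk.length_cons, Nat.add_eq_zero, add_eq_right] at h
    have := SimpleGraph.Walk.eq_of_length_eq_zero h
    subst this
    exact hadj

lemma path_destruct {u v x : V} (Q : G.Walk u v) (hQ : Q.IsPath) (h : s(u, x) ∈ Q.edges) :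
    ∃ (h' : G.Adj u x) (Q' : G.Walk x v), Q = SimpleGraph.Walk.cons h' Q' := by
  cases Q with
  | nil => simp at h
  | @cons _ w _ hadj Q' =>
    rw [SimpleGraph.Walk.edges_cons, List.mem_cons] at h
    rcases h with h | h
    · rw [Sym2.congr_right] at h
      subst h
      exact ⟨hadj, Q', rfl⟩
    · exfalso
      have : u ∈ Q'.support := SimpleGraph.Walk.fst_mem_support_of_mem_edges Q' h
      rw [SimpleGraph.Walk.cons_isPath_iff] at hQ
      exact hQ.2 this


section ZModTraj

lemma traj {n : ℕ} (φ : ℕ → ZMod n) (m : ℕ)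
    (hstep : ∀ k < m, φ (k + 1) = φ k + 1 ∨ φ (k + 1) = φ k - 1)
    (hinj : ∀ k ≤ m, ∀ l ≤ m, φ k = φ l → k = l) :
    (∀ k ≤ m, φ k = φ 0 + k) ∨ (∀ k ≤ m, φ k = φ 0 - k) := by
  rcases Nat.eq_zero_or_pos m with rfl | hm
  · left
    intro k hk
    interval_cases k
    simp
  rcases hstep 0 hm with h1 | h1
  · left
    intro k
    induction k using Nat.strong_induction_on with
    | _ k ih =>
      intro hk
      match k with
      | 0 => simp
      | 1 => rw [h1]; push_cast; ring
      | (k + 2) =>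
        have e1 : φ (k + 1) = φ 0 + (↑(k + 1) : ZMod n) := ih (k + 1) (by omega) (by omega)
        have e0 : φ k = φ 0 + (↑k : ZMod n) := ih k (by omega) (by omega)
        rcases hstep (k + 1) (by omega) with h | h
        · rw [h, e1]; push_cast; ring
        · exfalso
          have : φ (k + 2) = φ k := by rw [h, e1, e0]; push_cast; ring
          have := hinj (k + 2) hk k (by omega) this
          omega
  · right
    intro k
    induction k using Nat.strong_induction_on with
    | _ k ih =>
      intro hk
      match k with
      | 0 => simp
      | 1 => rw [h1]; push_cast; ring
      | (k + 2) =>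
        have e1 : φ (k + 1) = φ 0 - (↑(k + 1) : ZMod n) := ih (k + 1) (by omega) (by omega)
        have e0 : φ k = φ 0 - (↑k : ZMod n) := ih k (by omega) (by omega)
        rcases hstep (k + 1) (by omega) with h | h
        · exfalso
          have : φ (k + 2) = φ k := by rw [h, e1, e0]; push_cast; ring
          have := hinj (k + 2) hk k (by omega) this
          omega
        · rw [h, e1]; push_cast; ring

end ZModTraj

section CycleIdx

variable {r s t : V}

lemma getVert_cast (c : G.Walk r r) (hn : 1 ≤ c.length) {i : ℕ} (hi : i ≤ c.length) :
    c.getVert ((i : ZMod c.length)).val = c.getVert i := by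
  rw [ZMod.val_natCast]
  rcases Nat.lt_or_ge i c.length with h | h
  · rw [Nat.mod_eq_of_lt h]
  · have : i = c.length := by omega
    subst this
    rw [Nat.mod_self, SimpleGraph.Walk.getVert_zero, SimpleGraph.Walk.getVert_length]

lemma cycle_val_inj {c : G.Walk r r} (hc : c.IsCycle) {a b : ZMod c.length}
    (h : c.getVert a.val = c.getVert b.val) : a = b := by
  haveI : NeZero c.length := ⟨by have := hc.three_le_length; omega⟩
  exact ZMod.val_injective c.length (cycle_getVert_inj hc (ZMod.val_lt a) (ZMod.val_lt b) h)

/-- Trajectory lemma: a path starting at the base of a cycle, with all edges on the cycle,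
follows the cycle in one of the two directions. -/
lemma walk_traj {c : G.Walk s s} (hc : c.IsCycle) (Q : G.Walk s t) (hQ : Q.IsPath)
    (hQe : ∀ e ∈ Q.edges, e ∈ c.edges) :
    (∀ k ≤ Q.length, Q.getVert k = c.getVert ((k : ZMod c.length)).val) ∨
    (∀ k ≤ Q.length, Q.getVert k = c.getVert ((-(k : ZMod c.length)).val)) := by
  have h3 := hc.three_le_length
  haveI : NeZero c.length := ⟨by omega⟩
  rcases Nat.eq_zero_or_pos Q.length with h0 | hm
  · left
    intro k hk
    have hk0 : k = 0 := by omega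
    subst hk0
    simp [SimpleGraph.Walk.getVert_zero, ZMod.val_zero]
  -- every vertex of Q is on the cycle
  have hsupp : ∀ w ∈ Q.support, ∃ i : ZMod c.length, c.getVert i.val = w := by
    intro w hw
    obtain ⟨e, he, hwe⟩ := mem_edge_of_mem_support Q hm hw
    have hec := hQe e he
    induction e with
    | _ a b =>
      have ha : a ∈ c.support := SimpleGraph.Walk.fst_mem_support_of_mem_edges c hec
      have hb : b ∈ c.support := SimpleGraph.Walk.snd_mem_support_of_mem_edges c hec
      rcases Sym2.mem_iff.mp hwe with rfl | rfl
      · obtain ⟨i, hi, hgi⟩ := (mem_support_iff_getVert c).mp ha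
        exact ⟨(i : ZMod c.length), by rw [getVert_cast c (by omega) hi]; exact hgi⟩
      · obtain ⟨i, hi, hgi⟩ := (mem_support_iff_getVert c).mp hb
        exact ⟨(i : ZMod c.length), by rw [getVert_cast c (by omega) hi]; exact hgi⟩
  have hchoice : ∀ k ≤ Q.length, ∃ i : ZMod c.length, c.getVert i.val = Q.getVert k := by
    intro k hk
    exact hsupp _ ((mem_support_iff_getVert Q).mpr ⟨k, hk, rfl⟩)
  classical
  set φ : ℕ → ZMod c.length := fun k =>
    if h : ∃ i : ZMod c.length, c.getVert i.val = Q.getVert k then h.choose else 0 with hφdef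
  have hφ : ∀ k ≤ Q.length, c.getVert (φ k).val = Q.getVert k := by
    intro k hk
    have h := hchoice k hk
    simp only [hφdef, dif_pos h]
    exact h.choose_spec
  have hstep : ∀ k < Q.length, φ (k + 1) = φ k + 1 ∨ φ (k + 1) = φ k - 1 := by
    intro k hk
    have he : s(Q.getVert k, Q.getVert (k + 1)) ∈ c.edges := hQe _ (consec_edge_mem Q hk)
    obtain ⟨i, hi, hie⟩ := (edge_mem_iff_getVert c _).mp he
    rw [Sym2.eq_iff] at hie
    rcases hie with ⟨hia, hib⟩ | ⟨hia, hib⟩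
    · left
      have hk1 : φ k = (i : ZMod c.length) := by
        apply cycle_val_inj hc
        rw [hφ k (by omega), getVert_cast c (by omega) (by omega), hia]
      have hk2 : φ (k + 1) = ((i + 1 : ℕ) : ZMod c.length) := by
        apply cycle_val_inj hc
        rw [hφ (k + 1) (by omega), getVert_cast c (by omega) (by omega), hib]
      rw [hk1, hk2]
      push_cast
      ring
    · right
      have hk1 : φ k = ((i + 1 : ℕ) : ZMod c.length) := by
        apply cycle_val_inj hc
        rw [hφ k (by omega), getVert_cast c (by omega) (by omega), hib]
      have hk2 : φ (k + 1) = (i : ZMod c.length) := by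
        apply cycle_val_inj hc
        rw [hφ (k + 1) (by omega), getVert_cast c (by omega) (by omega), hia]
      rw [hk1, hk2]
      push_cast
      ring
  have hinj : ∀ k ≤ Q.length, ∀ l ≤ Q.length, φ k = φ l → k = l := by
    intro k hk l hl h
    apply path_getVert_inj hQ hk hl
    rw [← hφ k hk, ← hφ l hl, h]
  have hφ0 : φ 0 = 0 := by
    apply cycle_val_inj hc
    rw [hφ 0 (by omega), SimpleGraph.Walk.getVert_zero, ZMod.val_zero,
      SimpleGraph.Walk.getVert_zero]
  rcases traj φ Q.length hstep hinj with h | h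
  · left
    intro k hk
    rw [← hφ k hk, h k hk, hφ0, zero_add]
  · right
    intro k hk
    rw [← hφ k hk, h k hk, hφ0, zero_sub]

/-- length of a nontrivial path on a cycle is between 1 and length - 1 -/
lemma pathOf_length_bounds {c : G.Walk s s} (hc : c.IsCycle) (hst : s ≠ t)
    (Q : G.Walk s t) (hQ : Q.IsPath) (hQe : ∀ e ∈ Q.edges, e ∈ c.edges) :
    1 ≤ Q.length ∧ Q.length + 1 ≤ c.length := by
  have h3 := hc.three_le_length
  haveI : NeZero c.length := ⟨by omega⟩
  constructor
  · by_contra h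
    have : Q.length = 0 := by omega
    exact hst (SimpleGraph.Walk.eq_of_length_eq_zero this)
  · by_contra h
    have hn : c.length ≤ Q.length := by omega
    have key : Q.getVert c.length = Q.getVert 0 := by
      rcases walk_traj hc Q hQ hQe with htr | htr
      · rw [htr c.length hn, htr 0 (by omega)]
        congr 1
        push_cast
        simp [ZMod.natCast_self]
      · rw [htr c.length hn, htr 0 (by omega)]
        congr 1
        push_cast
        simp [ZMod.natCast_self]
    have := path_getVert_inj hQ (by omega : c.length ≤ Q.length) (by omega : 0 ≤ Q.length) key
    omega

/-- Classification: two paths between the same endpoints, both lying on a cycle,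
either coincide (same support) or complement each other. -/
lemma class_core {c : G.Walk s s} (hc : c.IsCycle) (hst : s ≠ t)
    (Q : G.Walk s t) (hQ : Q.IsPath) (hQe : ∀ e ∈ Q.edges, e ∈ c.edges)
    (R : G.Walk s t) (hR : R.IsPath) (hRe : ∀ e ∈ R.edges, e ∈ c.edges) :
    (Q.support = R.support ∧ Q.length = R.length) ∨ Q.length + R.length = c.length := by
  have h3 := hc.three_le_length
  haveI : NeZero c.length := ⟨by omega⟩
  obtain ⟨hQ1, hQ2⟩ := pathOf_length_bounds hc hst Q hQ hQe
  obtain ⟨hR1, hR2⟩ := pathOf_length_bounds hc hst R hR hRe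
  have hQv := Q.getVert_length
  have hRv := R.getVert_length
  rcases walk_traj hc Q hQ hQe with htQ | htQ <;> rcases walk_traj hc R hR hRe with htR | htR
  · -- same direction (+,+)
    left
    have hkey : c.getVert ((Q.length : ZMod c.length)).val
        = c.getVert ((R.length : ZMod c.length)).val := by
      rw [← htQ Q.length le_rfl, ← htR R.length le_rfl, hQv, hRv]
    have : ((Q.length : ZMod c.length)) = ((R.length : ZMod c.length)) :=
      cycle_val_inj hc hkey
    have hlen : Q.length = R.length := by
      have hv := congrArg ZMod.val this
      rw [ZMod.val_natCast, ZMod.val_natCast, Nat.mod_eq_of_lt (by omega),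
        Nat.mod_eq_of_lt (by omega)] at hv
      exact hv
    refine ⟨?_, hlen⟩
    rw [support_eq_map_getVert, support_eq_map_getVert, hlen]
    apply List.map_congr_left
    intro k hk
    rw [List.mem_range] at hk
    rw [htQ k (by omega), htR k (by omega)]
  · -- (+,-) : complementary
    right
    have hkey : c.getVert ((Q.length : ZMod c.length)).val
        = c.getVert ((-(R.length : ZMod c.length)).val) := by
      rw [← htQ Q.length le_rfl, ← htR R.length le_rfl, hQv, hRv]
    have heq : ((Q.length : ZMod c.length)) = -((R.length : ZMod c.length)) :=
      cycle_val_inj hc hkey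
    have hz : ((Q.length + R.length : ℕ) : ZMod c.length) = 0 := by
      push_cast
      rw [heq]
      ring
    rw [ZMod.natCast_eq_zero_iff] at hz
    obtain ⟨k, hk⟩ := hz
    -- 2 ≤ Q.length + R.length ≤ 2 * c.length - 2
    match k, hk with
    | 0, hk => omega
    | 1, hk => omega
    | (k + 2), hk =>
      have h2 : c.length * 2 ≤ c.length * (k + 2) := Nat.mul_le_mul_left _ (by omega)
      omega
  · -- (-,+) : complementary
    right
    have hkey : c.getVert ((-(Q.length : ZMod c.length)).val)
        = c.getVert ((R.length : ZMod c.length)).val := by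
      rw [← htQ Q.length le_rfl, ← htR R.length le_rfl, hQv, hRv]
    have heq : -((Q.length : ZMod c.length)) = ((R.length : ZMod c.length)) :=
      cycle_val_inj hc hkey
    have hz : ((Q.length + R.length : ℕ) : ZMod c.length) = 0 := by
      push_cast
      rw [← heq]
      ring
    rw [ZMod.natCast_eq_zero_iff] at hz
    obtain ⟨k, hk⟩ := hz
    match k, hk with
    | 0, hk => omega
    | 1, hk => omega
    | (k + 2), hk =>
      have h2 : c.length * 2 ≤ c.length * (k + 2) := Nat.mul_le_mul_left _ (by omega)
      omega
  · -- same direction (-,-)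
    left
    have hkey : c.getVert ((-(Q.length : ZMod c.length)).val)
        = c.getVert ((-(R.length : ZMod c.length)).val) := by
      rw [← htQ Q.length le_rfl, ← htR R.length le_rfl, hQv, hRv]
    have heq : -((Q.length : ZMod c.length)) = -((R.length : ZMod c.length)) :=
      cycle_val_inj hc hkey
    have : ((Q.length : ZMod c.length)) = ((R.length : ZMod c.length)) := by
      have := congrArg Neg.neg heq
      simpa using this
    have hlen : Q.length = R.length := by
      have hv := congrArg ZMod.val this
      rw [ZMod.val_natCast, ZMod.val_natCast, Nat.mod_eq_of_lt (by omega),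
        Nat.mod_eq_of_lt (by omega)] at hv
      exact hv
    refine ⟨?_, hlen⟩
    rw [support_eq_map_getVert, support_eq_map_getVert, hlen]
    apply List.map_congr_left
    intro k hk
    rw [List.mem_range] at hk
    rw [htQ k (by omega), htR k (by omega)]

/-- a vertex of a cycle has at most two neighbours along the cycle -/
lemma cycle_nbr {c : G.Walk r r} (hc : c.IsCycle) {t z1 z2 z3 : V}
    (h1 : s(t, z1) ∈ c.edges) (h2 : s(t, z2) ∈ c.edges) (h3 : s(t, z3) ∈ c.edges) :
    z1 = z2 ∨ z1 = z3 ∨ z2 = z3 := by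
  have hl3 := hc.three_le_length
  haveI : NeZero c.length := ⟨by omega⟩
  obtain ⟨i1, hi1, he1⟩ := (edge_mem_iff_getVert c _).mp h1
  rw [Sym2.eq_iff] at he1
  -- find the canonical index τ of t
  have hmk : ∃ τ : ZMod c.length, c.getVert τ.val = t ∧
      (z1 = c.getVert ((τ + 1).val) ∨ z1 = c.getVert ((τ - 1).val)) := by
    rcases he1 with ⟨ha, hb⟩ | ⟨ha, hb⟩
    · refine ⟨(i1 : ZMod c.length), ?_, Or.inl ?_⟩
      · rw [getVert_cast c (by omega) (by omega)]; exact ha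
      · have : ((i1 : ZMod c.length) + 1) = ((i1 + 1 : ℕ) : ZMod c.length) := by push_cast; ring
        rw [this, getVert_cast c (by omega) (by omega)]
        exact hb.symm
    · refine ⟨((i1 + 1 : ℕ) : ZMod c.length), ?_, Or.inr ?_⟩
      · rw [getVert_cast c (by omega) (by omega)]; exact hb
      · have : (((i1 + 1 : ℕ) : ZMod c.length) - 1) = ((i1 : ℕ) : ZMod c.length) := by
          push_cast; ring
        rw [this, getVert_cast c (by omega) (by omega)]
        exact ha.symm
  obtain ⟨τ, hτ, hz1⟩ := hmk
  have inner : ∀ z, s(t, z) ∈ c.edges →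
      z = c.getVert ((τ + 1).val) ∨ z = c.getVert ((τ - 1).val) := by
    intro z hz
    obtain ⟨i, hi, hie⟩ := (edge_mem_iff_getVert c _).mp hz
    rw [Sym2.eq_iff] at hie
    rcases hie with ⟨ha, hb⟩ | ⟨ha, hb⟩
    · have hiτ : ((i : ℕ) : ZMod c.length) = τ := by
        apply cycle_val_inj hc
        rw [getVert_cast c (by omega) (by omega), ha, hτ]
      left
      have : (τ + 1) = ((i + 1 : ℕ) : ZMod c.length) := by rw [← hiτ]; push_cast; ring
      rw [this, getVert_cast c (by omega) (by omega)]
      exact hb.symm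
    · have hiτ : ((i + 1 : ℕ) : ZMod c.length) = τ := by
        apply cycle_val_inj hc
        rw [getVert_cast c (by omega) (by omega), hb, hτ]
      right
      have : (τ - 1) = ((i : ℕ) : ZMod c.length) := by rw [← hiτ]; push_cast; ring
      rw [this, getVert_cast c (by omega) (by omega)]
      exact ha.symm
  have hz2 := inner z2 h2
  have hz3 := inner z3 h3
  rcases hz1 with h | h <;> rcases hz2 with h' | h' <;> rcases hz3 with h'' | h'' <;>
    simp [h, h', h'']

end CycleIdx



section Wrappers

variable {V : Type*} {G : SimpleGraph V}

/-- helper: each vertex of a walk with all edges on `c` lies on `c` (when nontrivial) -/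
lemma support_sub {a b r : V} (p : G.Walk a b) (c : G.Walk r r) (hp : 1 ≤ p.length)
    (he : ∀ e ∈ p.edges, e ∈ c.edges) : ∀ w ∈ p.support, w ∈ c.support := by
  intro w hw
  obtain ⟨e, hep, hwe⟩ := mem_edge_of_mem_support p hp hw
  have hec := he e hep
  induction e with
  | _ a' b' =>
    rcases Sym2.mem_iff.mp hwe with rfl | rfl
    · exact SimpleGraph.Walk.fst_mem_support_of_mem_edges c hec
    · exact SimpleGraph.Walk.snd_mem_support_of_mem_edges c hec

lemma mem_support_of_mem_edge {a b : V} (p : G.Walk a b) {e : Sym2 V} {w : V}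
    (hep : e ∈ p.edges) (hwe : w ∈ e) : w ∈ p.support := by
  induction e with
  | _ a' b' =>
    rcases Sym2.mem_iff.mp hwe with rfl | rfl
    · exact SimpleGraph.Walk.fst_mem_support_of_mem_edges p hep
    · exact SimpleGraph.Walk.snd_mem_support_of_mem_edges p hep

/-- classification of paths on a cycle relative to a complementary pair of arcs,
rotated version -/
lemma class_pair {r s t : V} {c : G.Walk r r} (hc : c.IsCycle) (hs : s ∈ c.support)
    (hst : s ≠ t) (Q : G.Walk s t) (hQ : Q.IsPath) (hQe : ∀ e ∈ Q.edges, e ∈ c.edges)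
    (R : G.Walk s t) (hR : R.IsPath) (hRe : ∀ e ∈ R.edges, e ∈ c.edges) :
    (Q.support = R.support ∧ Q.length = R.length) ∨ Q.length + R.length = c.length := by
  classical
  set c' := c.rotate s hs with hc'def
  have hc' : c'.IsCycle := hc.rotate hs
  have hlen : c'.length = c.length := by
    have h1 := congrArg SimpleGraph.Walk.length (c.take_spec hs)
    rw [SimpleGraph.Walk.length_append] at h1
    have h2 : c'.length = (c.dropUntil s hs).length + (c.takeUntil s hs).length := by
      rw [hc'def, SimpleGraph.Walk.rotate, SimpleGraph.Walk.length_append]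
    omega
  have hmem : ∀ e, e ∈ c.edges ↔ e ∈ c'.edges := by
    intro e
    exact ((c.rotate_edges s hs).mem_iff).symm
  have := class_core (c := c') hc' hst Q hQ (fun e he => (hmem e).mp (hQe e he))
    R hR (fun e he => (hmem e).mp (hRe e he))
  rwa [hlen] at this

lemma cycleDist_eq {r s t : V} {c : G.Walk r r} (hc : c.IsCycle) (hs : s ∈ c.support)
    (hst : s ≠ t) (R1 R2 : G.Walk s t) (h1 : IsPathOf G c R1) (h2 : IsPathOf G c R2)
    (hsum : R1.length + R2.length = c.length) :
    cycleDist G c s t = min R1.length R2.length ∧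
      ∀ Q : G.Walk s t, IsPathOf G c Q → Q.length = R1.length ∨ Q.length = R2.length := by
  have hclass : ∀ Q : G.Walk s t, IsPathOf G c Q →
      Q.length = R1.length ∨ Q.length = R2.length := by
    intro Q hQ
    rcases class_pair hc hs hst Q hQ.1 hQ.2 R1 h1.1 h1.2 with ⟨_, h⟩ | h
    · exact Or.inl h
    · right; omega
  unfold cycleDist
  refine ⟨le_antisymm ?_ ?_, hclass⟩
  · rcases le_total R1.length R2.length with h | h
    · rw [min_eq_left h]
      exact Nat.sInf_le ⟨R1, h1, rfl⟩
    · rw [min_eq_right h]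
      exact Nat.sInf_le ⟨R2, h2, rfl⟩
  · refine le_csInf ⟨R1.length, ⟨R1, h1, rfl⟩⟩ ?_
    rintro b ⟨Q, hQ, rfl⟩
    rcases hclass Q hQ with h | h <;> omega

lemma shortest_path_exists {a b : V} (W0 : G.Walk a b) :
    ∃ R : G.Walk a b, R.IsPath ∧ ∀ W : G.Walk a b, R.length ≤ W.length := by
  classical
  have hne : {k | ∃ W : G.Walk a b, W.length = k}.Nonempty := ⟨W0.length, W0, rfl⟩
  obtain ⟨W, hW⟩ := Nat.sInf_mem hne
  refine ⟨W.bypass, W.bypass_isPath, fun W' => ?_⟩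
  calc W.bypass.length ≤ W.length := W.length_bypass_le
    _ ≤ W'.length := hW ▸ Nat.sInf_le ⟨W', rfl⟩

lemma hole_union_card [DecidableEq V] {r' a b : V} {w : G.Walk r' r'} (hw : w.IsCycle)
    {A : G.Walk a b} (hA : A.IsPath) {B : G.Walk a b} (hB : B.IsPath) (hab : a ≠ b)
    (hsupp : suppSet w = suppSet A ∪ suppSet B) :
    w.length + (A.support.toFinset ∩ B.support.toFinset).card = A.length + B.length + 2 ∧
      2 ≤ (A.support.toFinset ∩ B.support.toFinset).card := by
  have hF : w.support.toFinset = A.support.toFinset ∪ B.support.toFinset := by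
    ext z
    have hz := Set.ext_iff.mp hsupp z
    simp only [suppSet, Set.mem_setOf_eq, Set.mem_union] at hz
    simp only [List.mem_toFinset, Finset.mem_union]
    exact hz
  have hcardw : w.support.toFinset.card = w.length := cycle_support_toFinset_card hw
  have hcardA : A.support.toFinset.card = A.length + 1 := path_support_toFinset_card hA
  have hcardB : B.support.toFinset.card = B.length + 1 := path_support_toFinset_card hB
  have hcup := Finset.card_union_add_card_inter A.support.toFinset B.support.toFinset
  rw [← hF, hcardw, hcardA, hcardB] at hcup
  constructor
  · omega
  · have hsub : ({a, b} : Finset V) ⊆ A.support.toFinset ∩ B.support.toFinset := by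
      intro z hz
      simp only [Finset.mem_insert, Finset.mem_singleton] at hz
      rcases hz with rfl | rfl <;>
        simp only [Finset.mem_inter, List.mem_toFinset] <;>
        exact ⟨by simp, by simp⟩
    have hcard2 : ({a, b} : Finset V).card = 2 := Finset.card_pair hab
    have := Finset.card_le_card hsub
    omega

end Wrappers


end StmtAuxSec

theorem stmt9 (G : SimpleGraph V) {r u v : V} (c : G.Walk r r)
    (hC : IsShortestEvenHole G c) (P : G.Walk u v)
    (hworst : WorstCShortcut G c P) (hshallow : CShallow G c P)
    (C1 C2 : G.Walk u v) (harc : ArcPair G c C1 C2) (hle : C1.length ≤ C2.length)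
    (x y : V) (hx : s(u, x) ∈ C1.edges) (hy : s(v, y) ∈ C1.edges)
    (Puv : G.Walk u v) (hPuv : IsShortestPath G Puv)
    (Pxy : G.Walk x y) (hPxy : IsShortestPath G Pxy) :
    (suppSet C2 \ {u, v}) ∩ closedNbhd G ((suppSet Puv ∪ suppSet Pxy) \ {u, v}) = ∅ ∧
    suppSet C2 ⊆ Hverts G Puv Pxy ∧
    (Hgraph G Puv Pxy).Reachable u v ∧
    ∀ Q : (Hgraph G Puv Pxy).Walk u v, IsShortestPath (Hgraph G Puv Pxy) Q →
      Q.length ≤ C2.length := by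
  
  classical
  obtain ⟨⟨⟨⟨hccyc, hcind⟩, hn4⟩, hneven⟩, hcmin⟩ := hC
  obtain ⟨⟨hPpath, hne, hnadj, humem, hvmem⟩, ⟨hp2, hpd, hp4⟩, hPbad, hwmin⟩ := hworst
  obtain ⟨hd1, -⟩ := hshallow
  obtain ⟨⟨hC1p, hC1e⟩, ⟨hC2p, hC2e⟩, hab, hcov⟩ := harc
  obtain ⟨hPuvp, hPuvmin⟩ := hPuv
  obtain ⟨hPxyp, hPxymin⟩ := hPxy
  have h3n : 3 ≤ c.length := hccyc.three_le_length
  have ha1 : 1 ≤ C1.length := by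
    by_contra h
    exact hne (SimpleGraph.Walk.eq_of_length_eq_zero (p := C1) (by omega))
  have hb1 : 1 ≤ C2.length := by
    by_contra h
    exact hne (SimpleGraph.Walk.eq_of_length_eq_zero (p := C2) (by omega))
  have hdpair := cycleDist_eq hccyc humem hne C1 C2 ⟨hC1p, hC1e⟩ ⟨hC2p, hC2e⟩ hab
  have hduv : cycleDist G c u v = C1.length := by
    rw [hdpair.1]
    exact min_eq_left hle
  have hpa : P.length ≤ C1.length := by rw [hduv] at hpd; exact hpd
  have hap : C1.length ≤ P.length + 1 := by rw [hduv] at hd1; omega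
  have hS1c : ∀ w ∈ C1.support, w ∈ c.support := support_sub C1 c ha1 hC1e
  have hS2c : ∀ w ∈ C2.support, w ∈ c.support := support_sub C2 c hb1 hC2e
  have hcS12 : ∀ w ∈ c.support, w ∈ C1.support ∨ w ∈ C2.support := by
    intro w hw
    obtain ⟨e, hec, hwe⟩ := mem_edge_of_mem_support c (by omega) hw
    rcases hcov e hec with h | h
    · exact Or.inl (mem_support_of_mem_edge C1 h hwe)
    · exact Or.inr (mem_support_of_mem_edge C2 h hwe)
  have hinter : ∀ w, w ∈ C1.support → w ∈ C2.support → w = u ∨ w = v := by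
    have hF : c.support.toFinset = C1.support.toFinset ∪ C2.support.toFinset := by
      ext z
      simp only [List.mem_toFinset, Finset.mem_union]
      exact ⟨fun h => hcS12 z h, fun h => h.elim (hS1c z) (hS2c z)⟩
    have hcardc := cycle_support_toFinset_card hccyc
    have hcard1 := path_support_toFinset_card hC1p
    have hcard2 := path_support_toFinset_card hC2p
    have hcup := Finset.card_union_add_card_inter C1.support.toFinset C2.support.toFinset
    rw [← hF, hcardc, hcard1, hcard2] at hcup
    have hsub : ({u, v} : Finset V) ⊆ C1.support.toFinset ∩ C2.support.toFinset := by
      intro z hz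
      simp only [Finset.mem_insert, Finset.mem_singleton] at hz
      rcases hz with rfl | rfl <;> simp only [Finset.mem_inter, List.mem_toFinset]
      · exact ⟨C1.start_mem_support, C2.start_mem_support⟩
      · exact ⟨C1.end_mem_support, C2.end_mem_support⟩
    have hcarduv : ({u, v} : Finset V).card = 2 := Finset.card_pair hne
    have hEq : ({u, v} : Finset V) = C1.support.toFinset ∩ C2.support.toFinset :=
      Finset.eq_of_subset_of_card_le hsub (by omega)
    intro w h1 h2
    have : w ∈ ({u, v} : Finset V) := by
      rw [hEq]
      simp only [Finset.mem_inter, List.mem_toFinset]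
      exact ⟨h1, h2⟩
    simpa using this
  have hux : G.Adj u x := C1.adj_of_mem_edges hx
  have hvy : G.Adj v y := C1.adj_of_mem_edges hy
  have hxS1 : x ∈ C1.support := mem_support_of_mem_edge C1 hx (by simp)
  have hyS1 : y ∈ C1.support := mem_support_of_mem_edge C1 hy (by simp)
  have hxu : x ≠ u := hux.ne'
  have hxv : x ≠ v := fun h => hnadj (h ▸ hux)
  have hyv : y ≠ v := hvy.ne'
  have hyu : y ≠ u := fun h => hnadj (h ▸ hvy).symm
  have hxS2 : x ∉ C2.support := fun h => by
    rcases hinter x hxS1 h with h' | h'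
    · exact hxu h'
    · exact hxv h'
  have hyS2 : y ∉ C2.support := fun h => by
    rcases hinter y hyS1 h with h' | h'
    · exact hyu h'
    · exact hyv h'
  -- the path Cxy : the middle of C1
  obtain ⟨hux', C1x, hC1eq⟩ := path_destruct C1 hC1p hx
  have hC1xp : C1x.IsPath := by
    have := hC1p
    rw [hC1eq, SimpleGraph.Walk.cons_isPath_iff] at this
    exact this.1
  have hC1xlen : C1x.length + 1 = C1.length := by
    rw [hC1eq, SimpleGraph.Walk.length_cons]
  have hyC1x : s(v, y) ∈ C1x.edges := by
    have h := hy
    rw [hC1eq, SimpleGraph.Walk.edges_cons, List.mem_cons] at h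
    rcases h with h | h
    · exfalso
      rw [Sym2.eq_iff] at h
      rcases h with ⟨h1, h2⟩ | ⟨h1, h2⟩
      · exact hne.symm h1
      · exact hxv (h1.symm)
    · exact h
  have hyC1xr : s(v, y) ∈ C1x.reverse.edges := by
    rw [SimpleGraph.Walk.edges_reverse]
    exact List.mem_reverse.mpr hyC1x
  obtain ⟨hvy', Cyx, hCyxeq⟩ := path_destruct C1x.reverse hC1xp.reverse hyC1xr
  have hCyxp : Cyx.IsPath := by
    have := hC1xp.reverse
    rw [hCyxeq, SimpleGraph.Walk.cons_isPath_iff] at this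
    exact this.1
  have hCxyp : Cyx.reverse.IsPath := hCyxp.reverse
  have hCxylen : Cyx.reverse.length + 2 = C1.length := by
    have h1 : Cyx.length + 1 = C1x.reverse.length := by
      rw [hCyxeq, SimpleGraph.Walk.length_cons]
    rw [SimpleGraph.Walk.length_reverse] at h1
    rw [SimpleGraph.Walk.length_reverse]
    omega
  have hCxye : ∀ e ∈ Cyx.reverse.edges, e ∈ c.edges := by
    intro e he
    apply hC1e
    rw [SimpleGraph.Walk.edges_reverse, List.mem_reverse] at he
    have h2 : e ∈ C1x.reverse.edges := by
      rw [hCyxeq, SimpleGraph.Walk.edges_cons]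
      exact List.mem_cons_of_mem _ he
    rw [SimpleGraph.Walk.edges_reverse, List.mem_reverse] at h2
    rw [hC1eq, SimpleGraph.Walk.edges_cons]
    exact List.mem_cons_of_mem _ h2
  -- the trichotomy for shortest paths from a vertex of C to u or v
  have trich : ∀ (s' t' : V) (R1 R2 : G.Walk t' s'), t' ∈ c.support → s' ∈ c.support →
      t' ≠ s' → IsPathOf G c R1 → IsPathOf G c R2 → R1.length + R2.length = c.length →
      (G.Adj t' s' → min R1.length R2.length = 1) →
      ∀ R : G.Walk t' s', R.IsPath → (∀ W : G.Walk t' s', R.length ≤ W.length) →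
      R.length = min R1.length R2.length ∨
        (R.length = P.length ∧ min R1.length R2.length ≤ C1.length) ∨
        P.length + 1 ≤ R.length := by
    intro s' t' R1 R2 ht' hs' hts hR1 hR2 hsum hadj R hRp hRmin
    have hcd := cycleDist_eq hccyc ht' hts R1 R2 hR1 hR2 hsum
    have hRle : R.length ≤ min R1.length R2.length :=
      le_min (hRmin R1) (hRmin R2)
    rcases Nat.lt_or_ge R.length 2 with hR2' | hR2'
    · -- length 0 or 1
      rcases Nat.eq_zero_or_pos R.length with h0 | h1
      · exact absurd (SimpleGraph.Walk.eq_of_length_eq_zero h0) hts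
      · have hR1' : R.length = 1 := by omega
        have := hadj (adj_of_length_one hR1')
        exact Or.inl (by omega)
    rcases Nat.lt_or_ge R.length (P.length + 1) with hRp' | hRp'
    · -- R.length ≤ P.length : R is a C-shortcut
      have hsetup : ShortcutSetup G c R := by
        refine ⟨hRp, hts, ?_, ht', hs'⟩
        intro h
        have := hRmin (SimpleGraph.Walk.cons h SimpleGraph.Walk.nil)
        simp at this
        omega
      have hshort : CShortcut G c R := by
        refine ⟨hR2', ?_, by omega⟩
        rw [hcd.1]
        exact hRle
      by_cases hgood : CGood G c R
      · -- good: R.length = min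
        obtain ⟨Q', hQ', hSEH⟩ := hgood
        obtain ⟨r', w', hw', hw'supp⟩ := hSEH
        have hnw' : c.length ≤ w'.length := hcmin r' w' hw'.1
        have hw'cyc : w'.IsCycle := hw'.1.1.1.1
        obtain ⟨hcardeq, hcard2⟩ := hole_union_card hw'cyc hRp hQ'.1 hts hw'supp
        have hQ'len := hcd.2 Q' hQ'
        left
        omega
      · have := hwmin t' s' R hsetup hshort hgood
        rcases this with h | ⟨h1, h2⟩
        · omega
        · right; left
          constructor
          · omega
          · rw [hcd.1] at h2
            rw [hduv] at h2
            exact h2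
    · right; right; omega
    -- MAIN CLAIM: no internal vertex of C2 is equal or adjacent to a vertex of
  -- (Puv ∪ Pxy) \ {u,v}
  have key1 : ∀ t ∈ C2.support, t ≠ u → t ≠ v → ∀ z, (z ∈ Puv.support ∨ z ∈ Pxy.support) →
      z ≠ u → z ≠ v → (z = t ∨ G.Adj z t) → False := by
    intro t ht htu htv z hz hzu hzv hzt
    have htc : t ∈ c.support := hS2c t ht
    have htS1 : t ∉ C1.support := fun h => by
      rcases hinter t h ht with h' | h'
      · exact htu h'
      · exact htv h'
    -- arcs at t
    set tk := C2.takeUntil t ht with htkdef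
    set dp := C2.dropUntil t ht with hdpdef
    have htkp : tk.IsPath := hC2p.takeUntil ht
    have hdpp : dp.IsPath := hC2p.dropUntil ht
    have hspec : tk.append dp = C2 := C2.take_spec ht
    have hsumtd : tk.length + dp.length = C2.length := by
      have := congrArg SimpleGraph.Walk.length hspec
      rwa [SimpleGraph.Walk.length_append] at this
    have htke : ∀ e ∈ tk.edges, e ∈ c.edges := fun e he =>
      hC2e e (SimpleGraph.Walk.edges_takeUntil_subset _ _ he)
    have hdpe : ∀ e ∈ dp.edges, e ∈ c.edges := fun e he =>
      hC2e e (SimpleGraph.Walk.edges_dropUntil_subset _ _ he)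
    have hj1 : 1 ≤ tk.length := by
      by_contra h
      exact htu (SimpleGraph.Walk.eq_of_length_eq_zero (p := tk) (by omega)).symm
    have hjb : 1 ≤ dp.length := by
      by_contra h
      exact htv (SimpleGraph.Walk.eq_of_length_eq_zero (p := dp) (by omega))
    have hsuppsplit : tk.support ++ dp.support.tail = C2.support := by
      rw [← hspec, SimpleGraph.Walk.support_append]
    have hC2nodup : C2.support.Nodup := hC2p.support_nodup
    have hC2nodup' : (tk.support ++ dp.support.tail).Nodup := by rw [hsuppsplit]; exact hC2nodup
    have hdisj12 : ∀ w, w ∈ tk.support → w ∈ dp.support.tail → False := by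
      intro w h1 h2
      exact (List.disjoint_of_nodup_append hC2nodup') h1 h2
    have hudp : u ∉ dp.support := by
      intro h
      rw [SimpleGraph.Walk.support_eq_cons dp] at h
      rcases List.mem_cons.mp h with h | h
      · exact htu h.symm
      · exact hdisj12 u tk.start_mem_support h
    -- the two arcs from t to u
    have hA1p : tk.reverse.IsPath := htkp.reverse
    have hA1e : ∀ e ∈ tk.reverse.edges, e ∈ c.edges := by
      intro e he
      rw [SimpleGraph.Walk.edges_reverse, List.mem_reverse] at he
      exact htke e he
    have hA1len : tk.reverse.length = tk.length := SimpleGraph.Walk.length_reverse tk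
    have hA2p : (dp.append C1.reverse).IsPath := by
      rw [SimpleGraph.Walk.isPath_def, SimpleGraph.Walk.support_append]
      have hd1' : dp.support.Nodup := hdpp.support_nodup
      have hd2' : C1.reverse.support.tail.Nodup := by
        have := hC1p.reverse.support_nodup
        rw [SimpleGraph.Walk.support_eq_cons C1.reverse] at this
        exact (List.nodup_cons.mp this).2
      refine List.Nodup.append hd1' hd2' ?_
      intro w hw hw2
      have hwC1 : w ∈ C1.support := by
        have : w ∈ C1.reverse.support := List.mem_of_mem_tail hw2
        rwa [SimpleGraph.Walk.support_reverse, List.mem_reverse] at this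
      have hwC2 : w ∈ C2.support := SimpleGraph.Walk.support_dropUntil_subset C2 ht hw
      rcases hinter w hwC1 hwC2 with rfl | rfl
      · exact hudp hw
      · have := hC1p.reverse.support_nodup
        rw [SimpleGraph.Walk.support_eq_cons C1.reverse] at this
        exact (List.nodup_cons.mp this).1 hw2
    have hA2e : ∀ e ∈ (dp.append C1.reverse).edges, e ∈ c.edges := by
      intro e he
      rw [SimpleGraph.Walk.edges_append, List.mem_append] at he
      rcases he with he | he
      · exact hdpe e he
      · rw [SimpleGraph.Walk.edges_reverse, List.mem_reverse] at he
        exact hC1e e he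
    have hA2len : (dp.append C1.reverse).length = dp.length + C1.length := by
      rw [SimpleGraph.Walk.length_append, SimpleGraph.Walk.length_reverse]
    have hsumA : tk.reverse.length + (dp.append C1.reverse).length = c.length := by
      rw [hA1len, hA2len]; omega
    -- the two arcs from t to v
    have hB2p : (tk.reverse.append C1).IsPath := by
      rw [SimpleGraph.Walk.isPath_def, SimpleGraph.Walk.support_append]
      have hd1' : tk.reverse.support.Nodup := hA1p.support_nodup
      have hd2' : C1.support.tail.Nodup := by
        have := hC1p.support_nodup
        rw [SimpleGraph.Walk.support_eq_cons C1] at this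
        exact (List.nodup_cons.mp this).2
      refine List.Nodup.append hd1' hd2' ?_
      intro w hw hw2
      have hwtk : w ∈ tk.support := by
        rwa [SimpleGraph.Walk.support_reverse, List.mem_reverse] at hw
      have hwC1 : w ∈ C1.support := List.mem_of_mem_tail hw2
      have hwC2 : w ∈ C2.support := SimpleGraph.Walk.support_takeUntil_subset C2 ht hwtk
      rcases hinter w hwC1 hwC2 with h' | h'
      · have := hC1p.support_nodup
        rw [SimpleGraph.Walk.support_eq_cons C1] at this
        exact (List.nodup_cons.mp this).1 (h' ▸ hw2)
      · have hvdp : v ∈ dp.support := dp.end_mem_support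
        rw [SimpleGraph.Walk.support_eq_cons dp] at hvdp
        rcases List.mem_cons.mp hvdp with h2 | h2
        · exact htv h2.symm
        · exact hdisj12 v (h' ▸ hwtk) h2
    have hB2e : ∀ e ∈ (tk.reverse.append C1).edges, e ∈ c.edges := by
      intro e he
      rw [SimpleGraph.Walk.edges_append, List.mem_append] at he
      rcases he with he | he
      · exact hA1e e he
      · exact hC1e e he
    have hB2len : (tk.reverse.append C1).length = tk.length + C1.length := by
      rw [SimpleGraph.Walk.length_append, hA1len]
    have hsumB : dp.length + (tk.reverse.append C1).length = c.length := by
      rw [hB2len]; omega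
    -- cycleDist computations
    have hXcd := cycleDist_eq hccyc htc htu tk.reverse (dp.append C1.reverse)
      ⟨hA1p, hA1e⟩ ⟨hA2p, hA2e⟩ hsumA
    have hYcd := cycleDist_eq hccyc htc htv dp (tk.reverse.append C1)
      ⟨hdpp, hdpe⟩ ⟨hB2p, hB2e⟩ hsumB
    -- adjacency degenerate cases
    have hadjtu : G.Adj t u → min tk.reverse.length (dp.append C1.reverse).length = 1 := by
      intro h
      have hedge : s(t, u) ∈ c.edges := hcind t u htc humem h
      rcases hcov _ hedge with h1 | h1
      · exact absurd (mem_support_of_mem_edge C1 h1 (by simp)) htS1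
      · have hW : IsPathOf G c (SimpleGraph.Walk.cons h SimpleGraph.Walk.nil) := by
          constructor
          · rw [SimpleGraph.Walk.cons_isPath_iff]
            exact ⟨SimpleGraph.Walk.IsPath.nil, by simp [htu]⟩
          · intro e he
            simp only [SimpleGraph.Walk.edges_cons, SimpleGraph.Walk.edges_nil,
              List.mem_cons, List.not_mem_nil, or_false] at he
            rw [he]
            exact hedge
        have hcl := hXcd.2 _ hW
        simp only [SimpleGraph.Walk.length_cons, SimpleGraph.Walk.length_nil] at hcl
        rw [hA1len, hA2len] at hcl ⊢
        omega
    have hadjtv : G.Adj t v → min dp.length (tk.reverse.append C1).length = 1 := by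
      intro h
      have hedge : s(t, v) ∈ c.edges := hcind t v htc hvmem h
      rcases hcov _ hedge with h1 | h1
      · exact absurd (mem_support_of_mem_edge C1 h1 (by simp)) htS1
      · have hW : IsPathOf G c (SimpleGraph.Walk.cons h SimpleGraph.Walk.nil) := by
          constructor
          · rw [SimpleGraph.Walk.cons_isPath_iff]
            exact ⟨SimpleGraph.Walk.IsPath.nil, by simp [htv]⟩
          · intro e he
            simp only [SimpleGraph.Walk.edges_cons, SimpleGraph.Walk.edges_nil,
              List.mem_cons, List.not_mem_nil, or_false] at he
            rw [he]
            exact hedge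
        have hcl := hYcd.2 _ hW
        simp only [SimpleGraph.Walk.length_cons, SimpleGraph.Walk.length_nil] at hcl
        rw [hB2len] at hcl ⊢
        omega
    -- shortest G-paths from t to u and v
    obtain ⟨Ru, hRup, hRumin⟩ := shortest_path_exists tk.reverse
    obtain ⟨Rv, hRvp, hRvmin⟩ := shortest_path_exists dp
    have hRu1 : 1 ≤ Ru.length := by
      by_contra h
      exact htu (SimpleGraph.Walk.eq_of_length_eq_zero (p := Ru) (by omega))
    have hRv1 : 1 ≤ Rv.length := by
      by_contra h
      exact htv (SimpleGraph.Walk.eq_of_length_eq_zero (p := Rv) (by omega))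
    have hRuA1 : Ru.length ≤ tk.length := by
      have := hRumin tk.reverse
      rwa [hA1len] at this
    have hRuA2 : Ru.length ≤ dp.length + C1.length := by
      have := hRumin (dp.append C1.reverse)
      rwa [hA2len] at this
    have hRvB1 : Rv.length ≤ dp.length := hRvmin dp
    have hRvB2 : Rv.length ≤ tk.length + C1.length := by
      have := hRvmin (tk.reverse.append C1)
      rwa [hB2len] at this
    have htrichu := trich u t tk.reverse (dp.append C1.reverse) htc humem htu
      ⟨hA1p, hA1e⟩ ⟨hA2p, hA2e⟩ hsumA hadjtu Ru hRup hRumin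
    have htrichv := trich v t dp (tk.reverse.append C1) htc hvmem htv
      ⟨hdpp, hdpe⟩ ⟨hB2p, hB2e⟩ hsumB hadjtv Rv hRvp hRvmin
    rw [hA1len, hA2len] at htrichu
    rw [hB2len] at htrichv
    obtain ⟨halfn, hn2⟩ := hneven
    rcases hz with hzPuv | hzPxy
    · -- CASE: z on Puv
      have hq2 : 2 ≤ Puv.length := by
        by_contra h
        rcases Nat.eq_zero_or_pos Puv.length with h0 | h1
        · exact hne (SimpleGraph.Walk.eq_of_length_eq_zero (p := Puv) h0)
        · exact hnadj (adj_of_length_one (p := Puv) (by omega))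
      have hqp : Puv.length ≤ P.length := hPuvmin P
      set ptk := Puv.takeUntil z hzPuv with hptkdef
      set pdp := Puv.dropUntil z hzPuv with hpdpdef
      have hsumz : ptk.length + pdp.length = Puv.length := by
        have := congrArg SimpleGraph.Walk.length (Puv.take_spec hzPuv)
        rwa [SimpleGraph.Walk.length_append] at this
      have hi1 : 1 ≤ ptk.length := by
        by_contra h
        exact hzu (SimpleGraph.Walk.eq_of_length_eq_zero (p := ptk) (by omega)).symm
      have hiq : 1 ≤ pdp.length := by
        by_contra h
        exact hzv (SimpleGraph.Walk.eq_of_length_eq_zero (p := pdp) (by omega))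
      have hups : Ru.length ≤ ptk.length + 1 ∧ Rv.length ≤ pdp.length + 1 := by
        rcases hzt with rfl | hadj
        · constructor
          · have := hRumin ptk.reverse
            rw [SimpleGraph.Walk.length_reverse] at this
            omega
          · have := hRvmin pdp
            omega
        · constructor
          · have := hRumin (SimpleGraph.Walk.cons hadj.symm ptk.reverse)
            rw [SimpleGraph.Walk.length_cons, SimpleGraph.Walk.length_reverse] at this
            omega
          · have := hRvmin (SimpleGraph.Walk.cons hadj.symm pdp)
            rw [SimpleGraph.Walk.length_cons] at this
            omega
      obtain ⟨hup1, hup2⟩ := hups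
      rcases htrichu with hu' | ⟨hu', hu''⟩ | hu' <;>
        rcases htrichv with hv' | ⟨hv', hv''⟩ | hv' <;>
          omega
    · -- CASE: z on Pxy
      by_cases hq2' : 2 ≤ Pxy.length
      · have hxyne : x ≠ y := by
          intro h
          have := hPxymin ((SimpleGraph.Walk.nil (u := x)).copy rfl h)
          rw [SimpleGraph.Walk.length_copy, SimpleGraph.Walk.length_nil] at this
          omega
        have hq'a : Pxy.length ≤ Cyx.reverse.length := hPxymin Cyx.reverse
        have hCxylen' : Cyx.reverse.length + 2 = C1.length := hCxylen
        -- the long arc from x to y through C2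
        set A2xy : G.Walk x y := SimpleGraph.Walk.cons hux.symm
          (C2.append (SimpleGraph.Walk.cons hvy SimpleGraph.Walk.nil)) with hA2xydef
        have hA2xylen : A2xy.length = C2.length + 2 := by
          rw [hA2xydef, SimpleGraph.Walk.length_cons, SimpleGraph.Walk.length_append,
            SimpleGraph.Walk.length_cons, SimpleGraph.Walk.length_nil]
        have hA2xysupp : A2xy.support = x :: (C2.support ++ [y]) := by
          rw [hA2xydef, SimpleGraph.Walk.support_cons, SimpleGraph.Walk.support_append]
          simp
        have hA2xyp : A2xy.IsPath := by
          rw [SimpleGraph.Walk.isPath_def, hA2xysupp, List.nodup_cons]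
          constructor
          · intro h
            rcases List.mem_append.mp h with h | h
            · exact hxS2 h
            · simp only [List.mem_singleton] at h
              exact hxyne h
          · refine List.Nodup.append hC2nodup (List.nodup_singleton y) ?_
            intro w hw hw2
            simp only [List.mem_singleton] at hw2
            subst hw2
            exact hyS2 hw
        have hA2xye : ∀ e ∈ A2xy.edges, e ∈ c.edges := by
          intro e he
          rw [hA2xydef, SimpleGraph.Walk.edges_cons, List.mem_cons] at he
          rcases he with he | he
          · rw [he, Sym2.eq_swap]
            exact hC1e _ hx
          · rw [SimpleGraph.Walk.edges_append, List.mem_append] at he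
            rcases he with he | he
            · exact hC2e _ he
            · simp only [SimpleGraph.Walk.edges_cons, SimpleGraph.Walk.edges_nil,
                List.mem_cons, List.not_mem_nil, or_false] at he
              rw [he]
              exact hC1e _ hy
        have hsumxy : Cyx.reverse.length + A2xy.length = c.length := by
          rw [hA2xylen]; omega
        have hxc : x ∈ c.support := hS1c x hxS1
        have hyc : y ∈ c.support := hS1c y hyS1
        have hxycd := cycleDist_eq hccyc hxc hxyne Cyx.reverse A2xy
          ⟨hCxyp, hCxye⟩ ⟨hA2xyp, hA2xye⟩ hsumxy
        have hsetup : ShortcutSetup G c Pxy := by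
          refine ⟨hPxyp, hxyne, ?_, hxc, hyc⟩
          intro h
          have := hPxymin (SimpleGraph.Walk.cons h SimpleGraph.Walk.nil)
          simp only [SimpleGraph.Walk.length_cons, SimpleGraph.Walk.length_nil] at this
          omega
        have hshort : CShortcut G c Pxy := by
          refine ⟨hq2', ?_, by omega⟩
          rw [hxycd.1]
          exact le_min (hPxymin _) (hPxymin _)
        have hgood : CGood G c Pxy := by
          by_contra hbad
          rcases hwmin x y Pxy hsetup hshort hbad with h | ⟨h1, h2⟩
          · omega
          · omega
        obtain ⟨Q', hQ', hSEH⟩ := hgood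
        obtain ⟨r', w', hw', hw'supp⟩ := hSEH
        have hnw' : c.length ≤ w'.length := hcmin r' w' hw'.1
        have hw'cyc : w'.IsCycle := hw'.1.1.1.1
        have hw'ind := hw'.1.1.1.2
        obtain ⟨hcardeq, hcard2⟩ := hole_union_card hw'cyc hPxyp hQ'.1 hxyne hw'supp
        have hQ'len := hxycd.2 Q' hQ'
        have hQ'l : Q'.length = A2xy.length := by
          rcases hQ'len with h | h
          · exfalso; omega
          · exact h
        have hcardeq2 : (Pxy.support.toFinset ∩ Q'.support.toFinset).card = 2 := by omega
        have hxyIn : ({x, y} : Finset V) = Pxy.support.toFinset ∩ Q'.support.toFinset := by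
          apply Finset.eq_of_subset_of_card_le
          · intro z' hz'
            simp only [Finset.mem_insert, Finset.mem_singleton] at hz'
            rcases hz' with rfl | rfl <;> simp only [Finset.mem_inter, List.mem_toFinset]
            · exact ⟨Pxy.start_mem_support, Q'.start_mem_support⟩
            · exact ⟨Pxy.end_mem_support, Q'.end_mem_support⟩
          · rw [hcardeq2, Finset.card_pair hxyne]
        have hQ'supp : Q'.support = A2xy.support := by
          rcases class_pair hccyc hxc hxyne Q' hQ'.1 hQ'.2 A2xy hA2xyp hA2xye with ⟨h, _⟩ | h
          · exact h
          · exfalso; omega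
        have hC2Q' : ∀ w'' ∈ C2.support, w'' ∈ Q'.support := by
          intro w'' hw''
          rw [hQ'supp, hA2xysupp]
          simp [hw'']
        have htPxy : t ∉ Pxy.support := by
          intro h
          have : t ∈ ({x, y} : Finset V) := by
            rw [hxyIn]
            simp only [Finset.mem_inter, List.mem_toFinset]
            exact ⟨h, hC2Q' t ht⟩
          simp only [Finset.mem_insert, Finset.mem_singleton] at this
          rcases this with rfl | rfl
          · exact hxS2 ht
          · exact hyS2 ht
        -- the two neighbours of t along C2
        set tm := tk.getVert (tk.length - 1) with htmdef
        set tp := dp.getVert 1 with htpdef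
        have hadjtm : G.Adj tm t := by
          have hcons := consec_edge_mem tk (i := tk.length - 1) (by omega)
          rw [Nat.sub_add_cancel hj1, SimpleGraph.Walk.getVert_length] at hcons
          exact tk.adj_of_mem_edges hcons
        have htmtk : tm ∈ tk.support :=
          (mem_support_iff_getVert tk).mpr ⟨tk.length - 1, by omega, rfl⟩
        have hadjtp : G.Adj t tp := by
          have hcons := consec_edge_mem dp (i := 0) (by omega)
          rw [SimpleGraph.Walk.getVert_zero] at hcons
          exact dp.adj_of_mem_edges hcons
        have htpdp : tp ∈ dp.support :=
          (mem_support_iff_getVert dp).mpr ⟨1, by omega, rfl⟩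
        have htmC2 : tm ∈ C2.support := SimpleGraph.Walk.support_takeUntil_subset C2 ht htmtk
        have htpC2 : tp ∈ C2.support := SimpleGraph.Walk.support_dropUntil_subset C2 ht htpdp
        have htptail : tp ∈ dp.support.tail := by
          have hcons := SimpleGraph.Walk.support_eq_cons dp
          rw [hcons] at htpdp
          rcases List.mem_cons.mp htpdp with h | h
          · exact absurd h hadjtp.ne'
          · exact h
        have htmtp : tm ≠ tp := fun h => hdisj12 tm htmtk (h ▸ htptail)
        have hmemw' : ∀ w'', w'' ∈ Pxy.support ∨ w'' ∈ Q'.support → w'' ∈ w'.support := by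
          intro w'' hw''
          have hiff := Set.ext_iff.mp hw'supp w''
          simp only [suppSet, Set.mem_setOf_eq, Set.mem_union] at hiff
          exact hiff.mpr hw''
        have htw' : t ∈ w'.support := hmemw' t (Or.inr (hC2Q' t ht))
        have htmw' : tm ∈ w'.support := hmemw' tm (Or.inr (hC2Q' tm htmC2))
        have htpw' : tp ∈ w'.support := hmemw' tp (Or.inr (hC2Q' tp htpC2))
        have hzw' : z ∈ w'.support := hmemw' z (Or.inl hzPxy)
        have hzadj : G.Adj z t := by
          rcases hzt with rfl | h
          · exact absurd hzPxy htPxy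
          · exact h
        have he1 : s(t, tm) ∈ w'.edges := hw'ind t tm htw' htmw' hadjtm.symm
        have he2 : s(t, tp) ∈ w'.edges := hw'ind t tp htw' htpw' hadjtp
        have he3 : s(t, z) ∈ w'.edges := hw'ind t z htw' hzw' hzadj.symm
        have hzC2' : z ∉ C2.support := by
          intro h
          have : z ∈ ({x, y} : Finset V) := by
            rw [hxyIn]
            simp only [Finset.mem_inter, List.mem_toFinset]
            exact ⟨hzPxy, hC2Q' z h⟩
          simp only [Finset.mem_insert, Finset.mem_singleton] at this
          rcases this with rfl | rfl
          · exact hxS2 h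
          · exact hyS2 h
        rcases cycle_nbr hw'cyc he1 he2 he3 with h | h | h
        · exact htmtp h
        · exact hzC2' (h ▸ htmC2)
        · exact hzC2' (h ▸ htpC2)
      · -- degenerate: Pxy has length ≤ 1
        have hz' : z = x ∨ z = y := by
          obtain ⟨k, hk, hkv⟩ := (mem_support_iff_getVert Pxy).mp hzPxy
          rcases Nat.eq_zero_or_pos k with rfl | h1
          · left
            rw [← hkv, SimpleGraph.Walk.getVert_zero]
          · right
            have hkl : k = Pxy.length := by omega
            rw [← hkv, hkl, SimpleGraph.Walk.getVert_length]
        have hzS1 : z ∈ C1.support := by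
          rcases hz' with rfl | rfl
          · exact hxS1
          · exact hyS1
        have hzS2 : z ∉ C2.support := by
          rcases hz' with rfl | rfl
          · exact hxS2
          · exact hyS2
        rcases hzt with rfl | hadj
        · exact hzS2 ht
        · have hedge : s(z, t) ∈ c.edges := hcind z t (hS1c z hzS1) htc hadj
          rcases hcov _ hedge with h | h
          · exact htS1 (mem_support_of_mem_edge C1 h (by simp))
          · exact hzS2 (mem_support_of_mem_edge C2 h (by simp))
  -- assemble the four conclusions
  have part1 : (suppSet C2 \ {u, v}) ∩
      closedNbhd G ((suppSet Puv ∪ suppSet Pxy) \ {u, v}) = ∅ := by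
    ext t
    simp only [Set.mem_inter_iff, Set.mem_diff, Set.mem_empty_iff_false, iff_false, not_and]
    rintro ⟨ht, htuv⟩ hN
    have htu : t ≠ u := fun h => htuv (by simp [h])
    have htv : t ≠ v := fun h => htuv (by simp [h])
    have ht' : t ∈ C2.support := ht
    rcases hN with hN | hN
    · obtain ⟨hN1, hN2⟩ := hN
      have hNu : t ≠ u := fun h => hN2 (by simp [h])
      have hNv : t ≠ v := fun h => hN2 (by simp [h])
      exact key1 t ht' htu htv t hN1 hNu hNv (Or.inl rfl)
    · obtain ⟨z, hzS, hadj⟩ := hN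
      obtain ⟨hz1, hz2⟩ := hzS
      have hzu : z ≠ u := fun h => hz2 (by simp [h])
      have hzv : z ≠ v := fun h => hz2 (by simp [h])
      exact key1 t ht' htu htv z hz1 hzu hzv (Or.inr hadj)
  have part2 : suppSet C2 ⊆ Hverts G Puv Pxy := by
    intro t ht
    by_cases h : t = u ∨ t = v
    · right
      rcases h with rfl | rfl <;> simp
    · left
      refine ⟨Set.mem_univ t, ?_⟩
      intro hN
      have := Set.eq_empty_iff_forall_notMem.mp part1 t
      exact this ⟨⟨ht, fun hm => h (by simpa using hm)⟩, hN⟩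
  have hC2edgesH : ∀ e ∈ C2.edges, e ∈ (Hgraph G Puv Pxy).edgeSet := by
    intro e he
    induction e with
    | _ a b =>
      have hadj : G.Adj a b := C2.adj_of_mem_edges he
      have haS : a ∈ Hverts G Puv Pxy :=
        part2 (SimpleGraph.Walk.fst_mem_support_of_mem_edges C2 he)
      have hbS : b ∈ Hverts G Puv Pxy :=
        part2 (SimpleGraph.Walk.snd_mem_support_of_mem_edges C2 he)
      exact (show G.Adj a b ∧ a ∈ Hverts G Puv Pxy ∧ b ∈ Hverts G Puv Pxy from ⟨hadj, haS, hbS⟩)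
  refine ⟨part1, part2, ⟨C2.transfer (Hgraph G Puv Pxy) hC2edgesH⟩, ?_⟩
  intro Q hQ
  have := hQ.2 (C2.transfer (Hgraph G Puv Pxy) hC2edgesH)
  rwa [SimpleGraph.Walk.length_transfer] at this
end

section
/- Let C be a cycle with ‖C‖ = 8a + b edges, where a ≥ 3 and 0 ≤ b ≤ 7 are integers. Then there exist vertices v_0, …, v_7 of C (indices modulo 8) such that the shortest v_i v_{i+1}-paths C_i of C for i ∈ {0,…,7} are pairwise edge-disjoint (so that C_0 ∪ ⋯ ∪ C_7 = C), and for every i ∈ {0,…,7}: ‖C_i‖ ∈ {a, a+1} and ‖C_i‖ + ‖C_{i+1}‖ ≤ 2a + ⌈b/4⌉. -/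
open SimpleGraph

variable {V : Type*}

namespace StmtAux

variable {V : Type*} {G : SimpleGraph V}

def wtake : ∀ {u v : V} (w : G.Walk u v) (n : ℕ), G.Walk u (w.getVert n)
  | _, _, .nil, _ => .nil
  | _, _, .cons _ _, 0 => .nil
  | _, _, .cons h p, n+1 => .cons h (wtake p n)

def wdrop : ∀ {u v : V} (w : G.Walk u v) (n : ℕ), G.Walk (w.getVert n) v
  | _, _, .nil, _ => .nil
  | _, _, .cons h p, 0 => .cons h p
  | _, _, .cons _ p, n+1 => wdrop p n

@[simp] lemma edges_wtake : ∀ {u v : V} (w : G.Walk u v) (n : ℕ),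
    (wtake w n).edges = w.edges.take n
  | _, _, .nil, _ => by simp [wtake]
  | _, _, .cons h p, 0 => by simp [wtake]; rfl
  | _, _, .cons h p, n+1 => by simp [wtake, edges_wtake p n]

@[simp] lemma edges_wdrop : ∀ {u v : V} (w : G.Walk u v) (n : ℕ),
    (wdrop w n).edges = w.edges.drop n
  | _, _, .nil, _ => by simp [wdrop]
  | _, _, .cons h p, 0 => by simp [wdrop]; rfl
  | _, _, .cons h p, n+1 => by simp [wdrop, edges_wdrop p n]

@[simp] lemma support_wtake : ∀ {u v : V} (w : G.Walk u v) (n : ℕ),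
    (wtake w n).support = w.support.take (n+1)
  | _, _, .nil, _ => by simp [wtake]
  | _, _, .cons h p, 0 => by simp [wtake]; rfl
  | _, _, .cons h p, n+1 => by simp [wtake, support_wtake p n]

lemma support_wdrop : ∀ {u v : V} (w : G.Walk u v) (n : ℕ), n ≤ w.length →
    (wdrop w n).support = w.support.drop n
  | _, _, .nil, 0, _ => by simp [wdrop]
  | _, _, .cons h p, 0, _ => by simp [wdrop]; rfl
  | _, _, .cons h p, n+1, hn => by
      simpa [wdrop] using support_wdrop p n (by simpa using hn)

@[simp] lemma length_wtake : ∀ {u v : V} (w : G.Walk u v) (n : ℕ),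
    (wtake w n).length = min n w.length
  | _, _, .nil, _ => by simp [wtake]
  | _, _, .cons h p, 0 => by simp [wtake]; rfl
  | _, _, .cons h p, n+1 => by
      simp [wtake, length_wtake p n, Nat.succ_min_succ]

@[simp] lemma length_wdrop : ∀ {u v : V} (w : G.Walk u v) (n : ℕ),
    (wdrop w n).length = w.length - n
  | _, _, .nil, _ => by simp [wdrop]
  | _, _, .cons h p, 0 => by simp [wdrop]; rfl
  | _, _, .cons h p, n+1 => by simp [wdrop, length_wdrop p n]

lemma getVert_wdrop : ∀ {u v : V} (w : G.Walk u v) (m k : ℕ),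
    (wdrop w m).getVert k = w.getVert (m + k)
  | _, _, .nil, _, _ => by simp [wdrop, SimpleGraph.Walk.getVert]
  | _, _, .cons h p, 0, k => by simp [wdrop]; rfl
  | _, _, .cons h p, m+1, k => by
      rw [show m + 1 + k = (m + k) + 1 by omega]
      simpa [wdrop] using getVert_wdrop p m k

lemma support_getElem : ∀ {u v : V} (w : G.Walk u v) (k : ℕ) (hk : k < w.support.length),
    w.support[k] = w.getVert k
  | _, _, .nil, 0, _ => by simp
  | _, _, .cons h p, 0, _ => by simp
  | _, _, .cons h p, k+1, hk => by
      simpa [SimpleGraph.Walk.getVert_cons_succ] using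
        support_getElem p k (by simpa [SimpleGraph.Walk.length_support] using hk)

lemma edges_getElem : ∀ {u v : V} (w : G.Walk u v) (k : ℕ) (hk : k < w.edges.length),
    w.edges[k] = s(w.getVert k, w.getVert (k+1))
  | _, _, .cons h p, 0, _ => by
      cases p <;> simp [SimpleGraph.Walk.getVert]
  | _, _, .cons h p, k+1, hk => by
      simpa [SimpleGraph.Walk.getVert_cons_succ] using
        edges_getElem p k (by simpa using hk)

/-- extra edges distribution -/
def extb (b i : ℕ) : ℕ :=
  if b ≤ 4 then (if i % 2 = 0 ∧ i / 2 < b then 1 else 0) else (if i < b then 1 else 0)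

def tfun (a b i : ℕ) : ℕ := a * i + (Finset.range i).sum (extb b)

end StmtAux

open StmtAux in
theorem stmt13 (G : SimpleGraph V) {r : V} (c : G.Walk r r) (hc : c.IsCycle)
    (a b : ℕ) (ha : 3 ≤ a) (hb : b ≤ 7) (hlen : c.length = 8 * a + b) :
    ∃ (v : ZMod 8 → V) (A : ∀ i : ZMod 8, G.Walk (v i) (v (i + 1))),
      (∀ i, IsPathOf G c (A i)) ∧
      (∀ i, (A i).length = cycleDist G c (v i) (v (i + 1))) ∧
      (∀ i j, i ≠ j → ∀ e ∈ (A i).edges, e ∉ (A j).edges) ∧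
      (∀ e ∈ c.edges, ∃ i, e ∈ (A i).edges) ∧
      (∀ i, (A i).length = a ∨ (A i).length = a + 1) ∧
      (∀ i, (A i).length + (A (i + 1)).length ≤ 2 * a + (b + 3) / 4) := by
  classical
  obtain ⟨hcirc, hcnodup⟩ := hc
  have hcedges : c.edges.Nodup := hcirc.isTrail.edges_nodup
  set n := c.length with hn
  haveI : NeZero n := ⟨by omega⟩
  -- numeric facts about the extra-edge distribution
  have hext1 : ∀ i < 8, extb b i ≤ 1 := by interval_cases b <;> decide
  have hext2 : (Finset.range 8).sum (extb b) = b := by interval_cases b <;> decide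
  have hext3 : ∀ i < 8, extb b i + extb b ((i + 1) % 8) ≤ (b + 3) / 4 := by
    interval_cases b <;> decide
  set t : ℕ → ℕ := tfun a b with ht
  set L : ℕ → ℕ := fun i => a + extb b i with hLdef
  have hstept : ∀ i, t (i + 1) = t i + L i := by
    intro i
    simp only [ht, hLdef, tfun, Finset.sum_range_succ]
    ring
  have ht0 : t 0 = 0 := by simp [ht, tfun]
  have ht8 : t 8 = n := by
    simp only [ht, tfun, hext2, hlen]
    ring
  have hmono : ∀ ⦃i j : ℕ⦄, i ≤ j → t i ≤ t j := by
    intro i j hij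
    simp only [ht, tfun]
    have h1 : a * i ≤ a * j := Nat.mul_le_mul_left a hij
    have h2 : (Finset.range i).sum (extb b) ≤ (Finset.range j).sum (extb b) :=
      Finset.sum_le_sum_of_subset (Finset.range_subset_range.mpr hij)
    omega
  have htL : ∀ i < 8, t i + L i ≤ n := by
    intro i hi
    rw [← hstept, ← ht8]
    exact hmono (by omega)
  have hLa : ∀ i < 8, L i ≤ a + 1 := by
    intro i hi
    have := hext1 i hi
    simp only [hLdef]
    omega
  have hLpos : ∀ i, a ≤ L i := by intro i; simp [hLdef]
  haveI : Fact (1 < 8) := ⟨by norm_num⟩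
  have hval : ∀ i : ZMod 8, (i + 1).val = (i.val + 1) % 8 := by
    intro i
    rw [ZMod.val_add, ZMod.val_one]
  -- endpoints
  have hend' : ∀ i : ZMod 8,
      (wdrop c (t i.val)).getVert (L i.val) = c.getVert (t (i + 1).val) := by
    intro i
    rw [getVert_wdrop]
    have hiv : i.val < 8 := ZMod.val_lt i
    rcases Nat.lt_or_ge i.val 7 with h7 | h7
    · have hv : (i + 1).val = i.val + 1 := by rw [hval]; omega
      rw [hv, hstept]
    · have hi7 : i.val = 7 := by omega
      have hv : (i + 1).val = 0 := by rw [hval, hi7]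
      rw [hv, hi7, ht0, ← hstept, ht8]
      simp [hn, SimpleGraph.Walk.getVert_length]
  -- the arcs
  set AA : ∀ i : ZMod 8, G.Walk (c.getVert (t i.val)) (c.getVert (t (i + 1).val)) :=
    fun i => (wtake (wdrop c (t i.val)) (L i.val)).copy rfl (hend' i) with hAA
  have hiv8 : ∀ i : ZMod 8, i.val < 8 := fun i => ZMod.val_lt i
  have htle : ∀ i : ZMod 8, t i.val ≤ n := by
    intro i
    have := htL i.val (hiv8 i)
    omega
  have hedgesA : ∀ i : ZMod 8, (AA i).edges = (c.edges.drop (t i.val)).take (L i.val) := by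
    intro i
    simp [hAA]
  have hce : c.edges.length = n := by rw [SimpleGraph.Walk.length_edges]
  have hsuppA : ∀ i : ZMod 8, (AA i).support = (c.support.drop (t i.val)).take (L i.val + 1) := by
    intro i
    simp [hAA, support_wdrop c (t i.val) (htle i)]
  have hlenA : ∀ i : ZMod 8, (AA i).length = L i.val := by
    intro i
    have h1 := htL i.val (hiv8 i)
    simp only [hAA, SimpleGraph.Walk.length_copy, length_wtake, length_wdrop]
    omega
  -- edge membership characterization
  have hmem : ∀ (i : ZMod 8) (e : Sym2 V), e ∈ (AA i).edges ↔
      ∃ k, t i.val ≤ k ∧ k < t i.val + L i.val ∧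
        ∃ (hk : k < c.edges.length), c.edges[k] = e := by
    intro i e
    rw [hedgesA, List.mem_iff_getElem]
    constructor
    · rintro ⟨j, hj, rfl⟩
      have hj' : j < L i.val ∧ t i.val + j < c.edges.length := by
        simp only [List.length_take, List.length_drop] at hj
        omega
      refine ⟨t i.val + j, by omega, by omega, hj'.2, ?_⟩
      rw [List.getElem_take, List.getElem_drop]
    · rintro ⟨k, hk1, hk2, hk3, rfl⟩
      refine ⟨k - t i.val, ?_, ?_⟩
      · simp only [List.length_take, List.length_drop]
        omega
      · rw [List.getElem_take, List.getElem_drop]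
        congr 1
        omega
  -- support facts
  have hlens : c.support.length = n + 1 := by rw [SimpleGraph.Walk.length_support]
  have hlent : c.support.tail.length = n := by
    rw [List.length_tail, hlens]
    omega
  have hgetsupp : ∀ k (hk : k < c.support.length), c.support[k] = c.getVert k :=
    fun k hk => support_getElem c k hk
  have hgt : ∀ m (hm1 : 1 ≤ m) (hmn : m ≤ n) (h : m - 1 < c.support.tail.length),
      c.support.tail[m - 1] = c.getVert m := by
    intro m hm1 hmn h
    rw [List.getElem_tail]
    have : m - 1 + 1 = m := by omega
    simp_rw [this]
    exact hgetsupp m (by omega)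
  have hinj1 : ∀ j k, 1 ≤ j → j ≤ n → 1 ≤ k → k ≤ n →
      c.getVert j = c.getVert k → j = k := by
    intro j k hj1 hjn hk1 hkn he
    have e1 := hgt j hj1 hjn (by omega)
    have e2 := hgt k hk1 hkn (by omega)
    have hjk : c.support.tail[j - 1]'(by omega) = c.support.tail[k - 1]'(by omega) := by
      rw [e1, e2, he]
    have := (hcnodup.getElem_inj_iff).mp hjk
    omega
  have hgv0 : c.getVert n = c.getVert 0 := by
    simp [hn, SimpleGraph.Walk.getVert_length]
  have hinj : ∀ j k, j < n → k < n → c.getVert j = c.getVert k → j = k := by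
    intro j k hj hk he
    rcases Nat.eq_zero_or_pos j with rfl | hj1 <;> rcases Nat.eq_zero_or_pos k with rfl | hk1
    · rfl
    · exact absurd (hinj1 n k (by omega) le_rfl hk1 (by omega) (hgv0.trans he)) (by omega)
    · exact absurd (hinj1 j n hj1 (by omega) (by omega) le_rfl (he.trans hgv0.symm)) (by omega)
    · exact hinj1 j k hj1 (by omega) hk1 (by omega) he
  -- the winding function
  set g : V → ZMod n := fun x =>
    if h : ∃ k, k < n ∧ c.getVert k = x then ((Classical.choose h : ℕ) : ZMod n) else 0
    with hgdef
  have hg : ∀ k, k < n → g (c.getVert k) = (k : ZMod n) := by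
    intro k hk
    have hex : ∃ m, m < n ∧ c.getVert m = c.getVert k := ⟨k, hk, rfl⟩
    simp only [hgdef, dif_pos hex]
    obtain ⟨h1, h2⟩ := Classical.choose_spec hex
    rw [hinj _ _ h1 hk h2]
  have hg' : ∀ k, k ≤ n → g (c.getVert k) = (k : ZMod n) := by
    intro k hk
    rcases eq_or_lt_of_le hk with rfl | hklt
    · rw [hgv0, hg 0 (by omega)]
      simp [ZMod.natCast_self]
    · exact hg k hklt
  have hstepg : ∀ x y : V, s(x, y) ∈ c.edges → g y = g x + 1 ∨ g x = g y + 1 := by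
    intro x y hxy
    rw [List.mem_iff_getElem] at hxy
    obtain ⟨k, hk, hke⟩ := hxy
    rw [edges_getElem] at hke
    have hkn : k < n := by rwa [hce] at hk
    have e1 : g (c.getVert k) = (k : ZMod n) := hg k hkn
    have e2 : g (c.getVert (k + 1)) = (k : ZMod n) + 1 := by
      rw [hg' (k + 1) (by omega)]
      push_cast
      ring
    rw [Sym2.eq_iff] at hke
    rcases hke with ⟨hx, hy⟩ | ⟨hy, hx⟩
    · left; rw [← hx, ← hy, e1, e2]
    · right; rw [← hx, ← hy, e1, e2]
  have hwalksum : ∀ (x y : V) (P : G.Walk x y), (∀ e ∈ P.edges, e ∈ c.edges) →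
      ∃ p q : ℕ, p + q = P.length ∧ g y + (q : ZMod n) = g x + (p : ZMod n) := by
    intro x y P
    induction P with
    | nil => exact fun _ => ⟨0, 0, rfl, by simp⟩
    | @cons x w y hadj P ih =>
      intro hsub
      obtain ⟨p, q, hpq, hgeq⟩ := ih (fun e he => hsub e (by simp [he]))
      have hedge : s(x, w) ∈ c.edges := hsub _ (by simp)
      rcases hstepg _ _ hedge with h | h
      · refine ⟨p + 1, q, by simp [← hpq]; ring, ?_⟩
        push_cast
        linear_combination hgeq + h
      · refine ⟨p, q + 1, by simp [← hpq]; ring, ?_⟩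
        push_cast
        linear_combination hgeq - h
  -- lower bound on lengths of paths in c between arc endpoints
  have hlow : ∀ i : ZMod 8, ∀ P : G.Walk (c.getVert (t i.val)) (c.getVert (t (i + 1).val)),
      (∀ e ∈ P.edges, e ∈ c.edges) → L i.val ≤ P.length := by
    intro i P hsub
    obtain ⟨p, q, hpq, hgeq⟩ := hwalksum _ _ P hsub
    have h1 : g (c.getVert (t i.val)) = ((t i.val : ℕ) : ZMod n) := hg' _ (htle i)
    have h2 : g (c.getVert (t (i + 1).val)) = ((t i.val + L i.val : ℕ) : ZMod n) := by
      rw [← hstept, ← hend', getVert_wdrop, hstept]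
      exact hg' _ (htL i.val (hiv8 i))
    rw [h1, h2] at hgeq
    have hz : (n : ℤ) ∣ ((p : ℤ) - q - L i.val) := by
      rw [← ZMod.intCast_zmod_eq_zero_iff_dvd]
      push_cast
      push_cast at hgeq
      linear_combination -hgeq
    obtain ⟨m, hm⟩ := hz
    have hLa' : L i.val ≤ a + 1 := hLa i.val (hiv8 i)
    have hnval : n = 8 * a + b := hlen
    rcases lt_trichotomy m 0 with hm0 | hm0 | hm0
    · have hb' : (n : ℤ) * m ≤ -(n : ℤ) := by nlinarith [hnval]
      omega
    · rw [hm0, mul_zero] at hm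
      omega
    · have hb' : (n : ℤ) ≤ (n : ℤ) * m := by nlinarith
      omega
  -- path property
  have hnodupA : ∀ i : ZMod 8, (AA i).support.Nodup := by
    intro i
    rw [hsuppA]
    rcases Nat.eq_zero_or_pos (t i.val) with h0 | hpos
    · rw [h0, List.drop_zero, c.support_eq_cons, List.take_succ_cons]
      refine List.nodup_cons.mpr ⟨?_, (List.take_sublist _ _).nodup hcnodup⟩
      intro hr
      rw [List.mem_iff_getElem] at hr
      obtain ⟨j, hj, hje⟩ := hr
      have hj' : j < L i.val ∧ j < c.support.tail.length := by
        simp only [List.length_take] at hj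
        omega
      rw [List.getElem_take] at hje
      have hrn : c.support.tail[n - 1]'(by omega) = c.getVert n := hgt n (by omega) le_rfl (by omega)
      have hrr : c.support.tail[n - 1]'(by omega) = r := by
        rw [hrn, hgv0]
        exact c.getVert_zero
      have hjeq : j = n - 1 := by
        have := (hcnodup.getElem_inj_iff).mp (hje.trans hrr.symm)
        omega
      have := hLa i.val (hiv8 i)
      omega
    · obtain ⟨s, hs⟩ : ∃ s, t i.val = s + 1 := ⟨t i.val - 1, by omega⟩
      rw [hs, c.support_eq_cons, List.drop_succ_cons]
      exact ((List.take_sublist _ _).trans (List.drop_sublist _ _)).nodup hcnodup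
  have hpathof : ∀ i : ZMod 8, IsPathOf G c (AA i) := by
    intro i
    refine ⟨(SimpleGraph.Walk.isPath_def _).mpr (hnodupA i), ?_⟩
    intro e he
    rw [hedgesA] at he
    exact ((List.take_sublist _ _).trans (List.drop_sublist _ _)).subset he
  refine ⟨fun i => c.getVert (t i.val), AA, hpathof, ?_, ?_, ?_, ?_, ?_⟩
  · -- shortest paths
    intro i
    have hmemS : (AA i).length ∈
        {m | ∃ P : G.Walk (c.getVert (t i.val)) (c.getVert (t (i + 1).val)),
          IsPathOf G c P ∧ P.length = m} := ⟨AA i, hpathof i, rfl⟩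
    refine le_antisymm ?_ (Nat.sInf_le hmemS)
    refine le_csInf ⟨_, hmemS⟩ ?_
    rintro m ⟨P, hP, rfl⟩
    rw [hlenA]
    exact hlow i P hP.2
  · -- pairwise edge-disjoint
    intro i j hij e hei hej
    rw [hmem] at hei hej
    obtain ⟨k1, h11, h12, hk1, he1⟩ := hei
    obtain ⟨k2, h21, h22, hk2, he2⟩ := hej
    have hkk : k1 = k2 := (hcedges.getElem_inj_iff).mp (he1.trans he2.symm)
    have hvne : i.val ≠ j.val := fun h => hij (ZMod.val_injective 8 h)
    rcases lt_or_gt_of_ne hvne with h | h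
    · have hle : t (i.val + 1) ≤ t j.val := hmono (by omega)
      rw [hstept] at hle
      omega
    · have hle : t (j.val + 1) ≤ t i.val := hmono (by omega)
      rw [hstept] at hle
      omega
  · -- covering
    intro e he
    rw [List.mem_iff_getElem] at he
    obtain ⟨k, hk, hke⟩ := he
    have hkn : k < n := by rwa [hce] at hk
    have hfind : ∀ m : ℕ, k < t m → ∃ i, i < m ∧ t i ≤ k ∧ k < t (i + 1) := by
      intro m
      induction m with
      | zero => intro h; rw [ht0] at h; omega
      | succ m ih =>
        intro hkm
        by_cases hx : k < t m
        · obtain ⟨i, h1, h2, h3⟩ := ih hx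
          exact ⟨i, by omega, h2, h3⟩
        · exact ⟨m, by omega, by omega, hkm⟩
    obtain ⟨i, hi8, hik, hik2⟩ := hfind 8 (by rw [ht8]; exact hkn)
    refine ⟨(i : ZMod 8), ?_⟩
    rw [hmem]
    have hval8 : ((i : ℕ) : ZMod 8).val = i := ZMod.val_natCast_of_lt hi8
    rw [hval8]
    exact ⟨k, hik, by rw [← hstept]; exact hik2, hk, hke⟩
  · -- lengths
    intro i
    rw [hlenA]
    have := hext1 i.val (hiv8 i)
    simp only [hLdef]
    omega
  · -- consecutive sums
    intro i
    rw [hlenA, hlenA]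
    have h3 := hext3 i.val (hiv8 i)
    have hv : (i + 1).val = (i.val + 1) % 8 := hval i
    rw [hv]
    simp only [hLdef]
    omega
end

section
/- Let C be a good shortest even hole of a graph G with ‖C‖ = 8a + b, where a ≥ 3 and 0 ≤ b ≤ 7 are integers. Let v_0, …, v_7 be vertices of C (indices modulo 8) such that the shortest v_i v_{i+1}-paths C_i of C are pairwise edge-disjoint and satisfy ‖C_i‖ ∈ {a, a+1} and ‖C_i‖ + ‖C_{i+1}‖ ≤ 2a + ⌈b/4⌉ for all i. Then every shortest v_i v_{i+1}-path P_i of G satisfies ‖P_i‖ = ‖C_i‖. -/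
open SimpleGraph

variable {V : Type*}

private lemma walk_prefix {G : SimpleGraph V} :
    ∀ {x v : V} (Q : G.Walk x v) {y : V} (c : G.Walk x y), Q.IsPath → c.IsPath →
      (∀ e ∈ Q.edges, e ∈ c.edges) → ∃ R : G.Walk v y, c = Q.append R := by
  intro x v Q
  induction Q with
  | nil => exact fun c _ _ _ => ⟨c, rfl⟩
  | @cons x z v f Q₁ ih =>
    intro y c hQ hc hsub
    cases c with
    | nil => simpa using hsub s(x, z) (by simp)
    | @cons _ w' _ h' c₁ =>
      have hxz : s(x, z) ∈ (SimpleGraph.Walk.cons h' c₁).edges := hsub _ (by simp)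
      rw [SimpleGraph.Walk.edges_cons, List.mem_cons] at hxz
      rcases hxz with hxz | hxz
      · obtain rfl : z = w' := Sym2.congr_right.mp hxz
        have hxQ₁ : x ∉ Q₁.support := ((SimpleGraph.Walk.cons_isPath_iff _ _).mp hQ).2
        have hsub₁ : ∀ e ∈ Q₁.edges, e ∈ c₁.edges := by
          intro e he
          have h1 := hsub e (by simp [he])
          rw [SimpleGraph.Walk.edges_cons, List.mem_cons] at h1
          rcases h1 with h1 | h1
          · exact absurd (SimpleGraph.Walk.fst_mem_support_of_mem_edges Q₁ (h1 ▸ he)) hxQ₁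
          · exact h1
        obtain ⟨R, hR⟩ := ih c₁ hQ.of_cons hc.of_cons hsub₁
        exact ⟨R, by rw [SimpleGraph.Walk.cons_append, ← hR]⟩
      · exact absurd (SimpleGraph.Walk.fst_mem_support_of_mem_edges c₁ hxz)
          ((SimpleGraph.Walk.cons_isPath_iff _ _).mp hc).2

private lemma edge_at_start {G : SimpleGraph V} {x y z : V} (p : G.Walk x y) (hp : p.IsPath)
    (hz : s(x, z) ∈ p.edges) : ∃ (f : G.Adj x z) (p' : G.Walk z y), p = SimpleGraph.Walk.cons f p' := by
  cases p with
  | nil => simp at hz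
  | @cons _ w' _ h' p₁ =>
    rw [SimpleGraph.Walk.edges_cons, List.mem_cons] at hz
    rcases hz with hz | hz
    · obtain rfl : z = w' := Sym2.congr_right.mp hz
      exact ⟨h', p₁, rfl⟩
    · exact absurd (SimpleGraph.Walk.fst_mem_support_of_mem_edges p₁ hz)
        ((SimpleGraph.Walk.cons_isPath_iff _ _).mp hp).2

/-- In a cycle `c` based at `u`, every `uv`-path whose edges lie on `c` has a complementary
`uv`-path on `c`, with lengths summing to the length of `c`. -/
private lemma arc_decomp {G : SimpleGraph V} {u v : V} (c : G.Walk u u) (hc : c.IsCycle)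
    (Q : G.Walk u v) (hQ : Q.IsPath) (hne : v ≠ u) (hsub : ∀ e ∈ Q.edges, e ∈ c.edges) :
    ∃ Q' : G.Walk u v, Q'.IsPath ∧ (∀ e ∈ Q'.edges, e ∈ c.edges) ∧
      Q.length + Q'.length = c.length := by
  cases Q with
  | nil => exact absurd rfl hne
  | @cons _ z _ f Q₁ =>
    cases c with
    | nil => exact absurd hc SimpleGraph.Walk.IsCycle.not_of_nil
    | @cons _ s _ h c₀ =>
      have hc₀ := (SimpleGraph.Walk.cons_isCycle_iff _ _).mp hc
      have huQ₁ : u ∉ Q₁.support := ((SimpleGraph.Walk.cons_isPath_iff _ _).mp hQ).2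
      have hfz : s(u, z) ∈ (SimpleGraph.Walk.cons h c₀).edges := hsub _ (by simp)
      rw [SimpleGraph.Walk.edges_cons, List.mem_cons] at hfz
      rcases hfz with hfz | hfz
      · -- the first edge of `Q` is the first edge of `c`
        obtain rfl : z = s := Sym2.congr_right.mp hfz
        have hsub₁ : ∀ e ∈ Q₁.edges, e ∈ c₀.edges := by
          intro e he
          have h1 := hsub e (by simp [he])
          rw [SimpleGraph.Walk.edges_cons, List.mem_cons] at h1
          rcases h1 with h1 | h1
          · exact absurd (SimpleGraph.Walk.fst_mem_support_of_mem_edges Q₁ (h1 ▸ he)) huQ₁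
          · exact h1
        obtain ⟨R, hR⟩ := walk_prefix Q₁ c₀ hQ.of_cons hc₀.1 hsub₁
        refine ⟨R.reverse, ?_, ?_, ?_⟩
        · exact (hR ▸ hc₀.1).of_append_right.reverse
        · intro e he
          rw [SimpleGraph.Walk.edges_reverse, List.mem_reverse] at he
          rw [SimpleGraph.Walk.edges_cons]
          refine List.mem_cons_of_mem _ ?_
          rw [hR, SimpleGraph.Walk.edges_append]
          exact List.mem_append_right _ he
        · have h1 : c₀.length = Q₁.length + R.length := by
            rw [hR, SimpleGraph.Walk.length_append]
          simp only [SimpleGraph.Walk.length_cons, SimpleGraph.Walk.length_reverse]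
          omega
      · -- the first edge of `Q` is the last edge of `c`
        have hc₀r : c₀.reverse.IsPath := hc₀.1.reverse
        have hz' : s(u, z) ∈ c₀.reverse.edges := by
          rw [SimpleGraph.Walk.edges_reverse, List.mem_reverse]; exact hfz
        obtain ⟨f', p', hp'⟩ := edge_at_start c₀.reverse hc₀r hz'
        have hp'path : p'.IsPath := by rw [hp'] at hc₀r; exact hc₀r.of_cons
        have hup' : u ∉ p'.support := by
          rw [hp'] at hc₀r; exact ((SimpleGraph.Walk.cons_isPath_iff _ _).mp hc₀r).2
        have hsub₁ : ∀ e ∈ Q₁.edges, e ∈ p'.edges := by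
          intro e he
          have h1 := hsub e (by simp [he])
          rw [SimpleGraph.Walk.edges_cons, List.mem_cons] at h1
          rcases h1 with h1 | h1
          · exact absurd (SimpleGraph.Walk.fst_mem_support_of_mem_edges Q₁ (h1 ▸ he)) huQ₁
          · have h2 : e ∈ (SimpleGraph.Walk.cons f' p').edges := by
              rw [← hp', SimpleGraph.Walk.edges_reverse, List.mem_reverse]; exact h1
            rw [SimpleGraph.Walk.edges_cons, List.mem_cons] at h2
            rcases h2 with h2 | h2
            · exact absurd (SimpleGraph.Walk.fst_mem_support_of_mem_edges Q₁ (h2 ▸ he)) huQ₁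
            · exact h2
        obtain ⟨R, hR⟩ := walk_prefix Q₁ p' hQ.of_cons hp'path hsub₁
        have hRpath : R.IsPath := (hR ▸ hp'path).of_append_right
        refine ⟨SimpleGraph.Walk.cons h R.reverse, ?_, ?_, ?_⟩
        · rw [SimpleGraph.Walk.cons_isPath_iff]
          refine ⟨hRpath.reverse, ?_⟩
          rw [SimpleGraph.Walk.support_reverse, List.mem_reverse]
          intro hu
          rw [R.support_eq_cons, List.mem_cons] at hu
          rcases hu with hu | hu
          · exact hne hu.symm
          · refine hup' ?_
            rw [hR, SimpleGraph.Walk.support_append]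
            exact List.mem_append_right _ hu
        · intro e he
          rw [SimpleGraph.Walk.edges_cons, List.mem_cons] at he
          rcases he with he | he
          · rw [SimpleGraph.Walk.edges_cons, he]; exact List.mem_cons_self
          · rw [SimpleGraph.Walk.edges_reverse, List.mem_reverse] at he
            have h2 : e ∈ p'.edges := by
              rw [hR, SimpleGraph.Walk.edges_append]; exact List.mem_append_right _ he
            have h3 : e ∈ c₀.reverse.edges := by
              rw [hp', SimpleGraph.Walk.edges_cons]; exact List.mem_cons_of_mem _ h2
            rw [SimpleGraph.Walk.edges_reverse, List.mem_reverse] at h3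
            rw [SimpleGraph.Walk.edges_cons]
            exact List.mem_cons_of_mem _ h3
        · have h1 : c₀.reverse.length = p'.length + 1 := by
            rw [hp', SimpleGraph.Walk.length_cons]
          have h2 : p'.length = Q₁.length + R.length := by
            rw [hR, SimpleGraph.Walk.length_append]
          have h3 : c₀.reverse.length = c₀.length := SimpleGraph.Walk.length_reverse _
          simp only [SimpleGraph.Walk.length_cons, SimpleGraph.Walk.length_reverse]
          omega

private lemma adj_of_length_eq_one {G : SimpleGraph V} {x y : V} (P : G.Walk x y)
    (h : P.length = 1) : G.Adj x y := by
  cases P with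
  | nil => simp at h
  | cons f P₁ =>
    rw [SimpleGraph.Walk.length_cons] at h
    have hz := SimpleGraph.Walk.eq_of_length_eq_zero (p := P₁) (by omega)
    rwa [hz] at f

private lemma start_mem_of_edges {G : SimpleGraph V} {x y : V} (W : G.Walk x y) {p q : V}
    (cw : G.Walk p q) (hlen : W.length ≠ 0) (hsub : ∀ e ∈ W.edges, e ∈ cw.edges) :
    x ∈ cw.support := by
  cases W with
  | nil => simp at hlen
  | @cons _ z _ h W₁ =>
    exact SimpleGraph.Walk.fst_mem_support_of_mem_edges cw (hsub s(x, z) (by simp))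

theorem stmt14 (G : SimpleGraph V) {r : V} (c : G.Walk r r)
    (hC : IsShortestEvenHole G c) (hgood : GoodHole G c)
    (a b : ℕ) (ha : 3 ≤ a) (hb : b ≤ 7) (hlen : c.length = 8 * a + b)
    (v : ZMod 8 → V) (A : ∀ i : ZMod 8, G.Walk (v i) (v (i + 1)))
    (hA : ∀ i, IsPathOf G c (A i))
    (hAshort : ∀ i, (A i).length = cycleDist G c (v i) (v (i + 1)))
    (hdisj : ∀ i j, i ≠ j → ∀ e ∈ (A i).edges, e ∉ (A j).edges)
    (hval : ∀ i, (A i).length = a ∨ (A i).length = a + 1)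
    (hsum : ∀ i, (A i).length + (A (i + 1)).length ≤ 2 * a + (b + 3) / 4) :
    ∀ (i : ZMod 8) (P : G.Walk (v i) (v (i + 1))), IsShortestPath G P →
      P.length = (A i).length := by
  classical
  intro i P hP
  obtain ⟨⟨⟨⟨hcyc, hind⟩, h4⟩, heven⟩, hmin⟩ := hC
  have hApath : (A i).IsPath := (hA i).1
  have hL3 : 3 ≤ (A i).length := by rcases hval i with h | h <;> omega
  -- the endpoints are distinct
  have hne : v i ≠ v (i + 1) := by
    intro h
    have hB : ((A i).copy rfl h.symm).IsPath := by
      rw [SimpleGraph.Walk.isPath_copy]; exact hApath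
    have := SimpleGraph.Walk.isPath_iff_eq_nil.mp hB
    have hlen0 := congrArg SimpleGraph.Walk.length this
    rw [SimpleGraph.Walk.length_copy] at hlen0
    simp only [SimpleGraph.Walk.length_nil] at hlen0
    omega
  -- the endpoints lie on `c`
  have hu : v i ∈ c.support :=
    start_mem_of_edges (A i) c (by omega) (hA i).2
  have hw : v (i + 1) ∈ c.support := by
    refine start_mem_of_edges (A i).reverse c ?_ ?_
    · rw [SimpleGraph.Walk.length_reverse]; omega
    · intro e he
      rw [SimpleGraph.Walk.edges_reverse, List.mem_reverse] at he
      exact (hA i).2 e he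
  -- the endpoints are nonadjacent
  have hnadj : ¬ G.Adj (v i) (v (i + 1)) := by
    intro hadj
    have hedge : s(v i, v (i + 1)) ∈ c.edges := hind _ _ hu hw hadj
    have hmem : (1 : ℕ) ∈ {n | ∃ P : G.Walk (v i) (v (i + 1)), IsPathOf G c P ∧ P.length = n} := by
      refine ⟨SimpleGraph.Walk.cons hadj SimpleGraph.Walk.nil, ⟨?_, ?_⟩, by simp⟩
      · rw [SimpleGraph.Walk.cons_isPath_iff]
        simp [hne]
      · intro e he
        simp only [SimpleGraph.Walk.edges_cons, SimpleGraph.Walk.edges_nil,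
          List.mem_singleton] at he
        rwa [he]
    have h1 : cycleDist G c (v i) (v (i + 1)) ≤ 1 := Nat.sInf_le hmem
    have h2 := hAshort i
    omega
  -- suppose `P` is strictly shorter than `A i`
  have hPle : P.length ≤ (A i).length := hP.2 (A i)
  by_contra hneq
  have hlt : P.length < (A i).length := lt_of_le_of_ne hPle hneq
  have h0 : P.length ≠ 0 := fun h => hne (SimpleGraph.Walk.eq_of_length_eq_zero h)
  have h1 : P.length ≠ 1 := fun hl => hnadj (adj_of_length_eq_one P hl)
  -- `P` is a `C`-shortcut, hence `C`-good
  have hsetup : ShortcutSetup G c P := ⟨hP.1, hne, hnadj, hu, hw⟩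
  have hshort : CShortcut G c P := by
    refine ⟨by omega, ?_, ?_⟩
    · rw [← hAshort i]; omega
    · rw [hlen]; rcases hval i with h | h <;> omega
  obtain ⟨Q, hQof, hhole⟩ := hgood _ _ P hsetup hshort
  obtain ⟨r', W, hW, hWsupp⟩ := hhole
  have hWlen : W.length = c.length :=
    le_antisymm (hW.2 _ _ ⟨⟨⟨hcyc, hind⟩, h4⟩, heven⟩) (hmin _ _ hW.1)
  -- counting vertices of the new hole
  have hWcard : W.support.toFinset.card = W.length := by
    cases W with
    | nil =>
      have := hW.1.1.2
      simp at this
    | cons hh q =>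
      have htail : q.support.Nodup := by
        have := hW.1.1.1.1.2
        rwa [SimpleGraph.Walk.support_cons, List.tail_cons] at this
      have hr' : r' ∈ q.support := q.end_mem_support
      rw [SimpleGraph.Walk.support_cons, List.toFinset_cons,
        Finset.insert_eq_self.mpr (by rwa [List.mem_toFinset]),
        List.toFinset_card_of_nodup htail, SimpleGraph.Walk.length_support,
        SimpleGraph.Walk.length_cons]
  have hQpath : Q.IsPath := hQof.1
  have hmemW : ∀ x, x ∈ W.support ↔ (x ∈ P.support ∨ x ∈ Q.support) := by
    intro x
    have := Set.ext_iff.mp hWsupp x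
    simpa [suppSet, Set.mem_union] using this
  have hFW : W.support.toFinset = P.support.toFinset ∪ Q.support.toFinset := by
    ext x
    simp [List.mem_toFinset, hmemW x]
  have hPcard : P.support.toFinset.card = P.length + 1 := by
    rw [List.toFinset_card_of_nodup hP.1.support_nodup, SimpleGraph.Walk.length_support]
  have hQcard : Q.support.toFinset.card = Q.length + 1 := by
    rw [List.toFinset_card_of_nodup hQpath.support_nodup, SimpleGraph.Walk.length_support]
  have hinter : 2 ≤ (P.support.toFinset ∩ Q.support.toFinset).card := by
    have hsubs : ({v i, v (i + 1)} : Finset V) ⊆ P.support.toFinset ∩ Q.support.toFinset := by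
      intro x hx
      rw [Finset.mem_insert, Finset.mem_singleton] at hx
      rcases hx with rfl | rfl <;>
        simp [List.mem_toFinset, SimpleGraph.Walk.start_mem_support,
          SimpleGraph.Walk.end_mem_support]
    calc 2 = ({v i, v (i + 1)} : Finset V).card := (Finset.card_pair hne).symm
      _ ≤ _ := Finset.card_le_card hsubs
  have hunion := Finset.card_union_add_card_inter P.support.toFinset Q.support.toFinset
  have hkey : c.length ≤ P.length + Q.length := by
    rw [hFW, hWlen] at hWcard
    omega
  -- the complementary arc of `Q`
  have hc' : (c.rotate (v i) hu).IsCycle := hcyc.rotate hu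
  have hmem' : ∀ e, e ∈ (c.rotate (v i) hu).edges ↔ e ∈ c.edges :=
    fun e => (SimpleGraph.Walk.rotate_edges c (v i) hu).mem_iff
  have hlen' : (c.rotate (v i) hu).length = c.length := by
    have := (SimpleGraph.Walk.rotate_edges c (v i) hu).perm.length_eq
    rwa [SimpleGraph.Walk.length_edges, SimpleGraph.Walk.length_edges] at this
  obtain ⟨Q', hQ'path, hQ'sub, hQ'len⟩ :=
    arc_decomp (c.rotate (v i) hu) hc' Q hQpath hne.symm
      (fun e he => (hmem' e).mpr (hQof.2 e he))
  have hQ'mem : Q'.length ∈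
      {n | ∃ P : G.Walk (v i) (v (i + 1)), IsPathOf G c P ∧ P.length = n} :=
    ⟨Q', ⟨hQ'path, fun e he => (hmem' e).mp (hQ'sub e he)⟩, rfl⟩
  have hd : cycleDist G c (v i) (v (i + 1)) ≤ Q'.length := Nat.sInf_le hQ'mem
  have hAs := hAshort i
  omega
end

section
/- Let C be a good shortest even hole of a graph G with ‖C‖ = 8a + b, where a ≥ 3 and 0 ≤ b ≤ 7 are integers. Let v_0, …, v_7 be vertices of C (indices modulo 8) such that the shortest v_i v_{i+1}-paths C_i of C are pairwise edge-disjoint and satisfy ‖C_i‖ ∈ {a, a+1} and ‖C_i‖ + ‖C_{i+1}‖ ≤ 2a + ⌈b/4⌉ for all i. For each i, let P_i be an arbitrary shortest v_i v_{i+1}-path of G. Then for every i ∈ {0,…,7}, the induced subgraph G[P_i ∪ P_{i+1}] is a path (with end-vertices v_i and v_{i+2}). -/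
open SimpleGraph

variable {V : Type*}

section AuxLemmas
open List
set_option linter.unusedSectionVars false
set_option linter.unusedVariables false
variable {G : SimpleGraph V} [DecidableEq V]


lemma takeUntil_first {y z : V} (p : G.Walk y z) (h : y ∈ p.support) :
    p.takeUntil y h = Walk.nil := by
  cases p with
  | nil => rfl
  | cons r p => simp [Walk.takeUntil]

lemma takeUntil_cons_ne {y u' z x : V} (r : G.Adj y u') (p : G.Walk u' z)
    (hx : x ∈ (Walk.cons r p).support) (h : y ≠ x) (hx' : x ∈ p.support) :
    (Walk.cons r p).takeUntil x hx = Walk.cons r (p.takeUntil x hx') := by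
  simp [Walk.takeUntil, dif_neg h]

lemma eq_snd_of_edge : ∀ {y z w : V} (p : G.Walk y z), p.IsPath → s(y, w) ∈ p.edges →
    ∃ (q : G.Walk w z) (ha : G.Adj y w), p = Walk.cons ha q := by
  intro y z w p hp he
  cases p with
  | nil => simp at he
  | cons r q =>
    rw [Walk.edges_cons, List.mem_cons] at he
    rcases he with he | he
    · obtain rfl := Sym2.congr_right.mp he
      exact ⟨q, r, rfl⟩
    · exact absurd (Walk.fst_mem_support_of_mem_edges q he)
        (by have := hp.2; simp only [Walk.support_cons, List.nodup_cons] at this; exact this.1)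

lemma walk_eq_takeUntil : ∀ {y x : V} (W : G.Walk y x) {z : V} (p : G.Walk y z),
    p.IsPath → W.IsPath → (∀ e ∈ W.edges, e ∈ p.edges) →
    ∃ h : x ∈ p.support, W = p.takeUntil x h := by
  intro y x W
  induction W with
  | nil => exact fun p hp _ _ => ⟨p.start_mem_support, (takeUntil_first p _).symm⟩
  | @cons y w x h W ih =>
    intro z p hp hW hsub
    obtain ⟨q, ha, rfl⟩ := eq_snd_of_edge p hp (hsub s(y, w) (by simp))
    have hyW : y ∉ W.support := by
      have := hW.2; simp only [Walk.support_cons, List.nodup_cons] at this; exact this.1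
    have hsub' : ∀ e ∈ W.edges, e ∈ q.edges := by
      intro e heW
      have := hsub e (by simp [heW])
      rw [Walk.edges_cons, List.mem_cons] at this
      rcases this with rfl | h2
      · exact absurd (Walk.fst_mem_support_of_mem_edges W heW) hyW
      · exact h2
    obtain ⟨hx, rfl⟩ := ih q (hp.of_cons) (hW.of_cons) hsub'
    have hne : y ≠ x := by
      rintro rfl
      exact hyW (Walk.end_mem_support _)
    refine ⟨by simp [hx], ?_⟩
    exact (takeUntil_cons_ne ha q _ hne hx).symm

/-- tail of a cycle is a path. -/
lemma cycle_tail_path {u s : V} {h1 : G.Adj u s} {q : G.Walk s u}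
    (hc : (Walk.cons h1 q).IsCycle) : q.IsPath :=
  Walk.IsPath.mk' (by have := hc.2; simpa using this)

/-- a path inside a cycle sharing the first edge is an initial segment. -/
lemma takeUntil_of_shared_first {u s x : V} (h1 : G.Adj u s) {q : G.Walk s u} (hq : q.IsPath)
    {W' : G.Walk s x} (hW : (Walk.cons h1 W').IsPath) (hx : x ≠ u)
    (hsub : ∀ e ∈ (Walk.cons h1 W').edges, e ∈ (Walk.cons h1 q).edges) :
    ∃ h : x ∈ (Walk.cons h1 q).support,
      Walk.cons h1 W' = (Walk.cons h1 q).takeUntil x h := by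
  have huW : u ∉ W'.support := by
    have := hW.2; simp only [Walk.support_cons, List.nodup_cons] at this; exact this.1
  have hsub' : ∀ e ∈ W'.edges, e ∈ q.edges := by
    intro e he
    have := hsub e (by simp [he])
    rw [Walk.edges_cons, List.mem_cons] at this
    rcases this with rfl | h2
    · exact absurd (Walk.fst_mem_support_of_mem_edges W' he) huW
    · exact h2
  obtain ⟨hxq, rfl⟩ := walk_eq_takeUntil W' q hq hW.of_cons hsub'
  refine ⟨by simp [hxq], ?_⟩
  exact (takeUntil_cons_ne h1 q _ (fun h => hx h.symm) hxq).symm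

lemma start_mem_of_edges_subset {u v p q : V} (c : G.Walk p q) (W : G.Walk u v)
    (h : 0 < W.length) (hsub : ∀ e ∈ W.edges, e ∈ c.edges) : u ∈ c.support := by
  cases W with
  | nil => simp at h
  | cons ha w =>
    exact Walk.fst_mem_support_of_mem_edges c
      (hsub _ (by rw [Walk.edges_cons]; exact List.mem_cons_self))

lemma end_mem_of_edges_subset {u v p q : V} (c : G.Walk p q) (W : G.Walk u v)
    (h : 0 < W.length) (hsub : ∀ e ∈ W.edges, e ∈ c.edges) : v ∈ c.support := by
  refine start_mem_of_edges_subset c W.reverse (by simpa using h) ?_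
  intro e he
  rw [Walk.edges_reverse, List.mem_reverse] at he
  exact hsub e he

lemma support_shape : ∀ {a b : V} (p : G.Walk a b), 0 < p.length →
    p.support = a :: (p.support.tail.dropLast ++ [b]) := by
  intro a b p
  induction p with
  | nil => intro h; simp at h
  | @cons a a' b ha q ih =>
    intro _
    cases q with
    | nil => simp
    | cons hb q' =>
      have hq : 0 < (Walk.cons hb q').length := by simp
      have := ih hq
      rw [Walk.support_cons, this]
      simp only [List.tail_cons]
      congr 1
      rw [show a' :: ((Walk.cons hb q').support.tail.dropLast ++ [b])
          = (a' :: (Walk.cons hb q').support.tail.dropLast) ++ [b] from by simp,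
        List.dropLast_concat]

lemma isCycle_reverse {u : V} {c : G.Walk u u} (hc : c.IsCycle) : c.reverse.IsCycle := by
  have hlen : 3 ≤ c.length := hc.three_le_length
  have hs := support_shape c (by omega)
  have htail : c.support.tail = c.support.tail.dropLast ++ [u] := by
    conv_lhs => rw [hs]
    rfl
  constructor
  · constructor
    · exact hc.1.1.reverse _
    · intro hn
      have : c.reverse.length = 0 := by rw [hn]; rfl
      rw [Walk.length_reverse] at this
      omega
  · have hnd : (c.support.tail.dropLast ++ [u]).Nodup := htail ▸ hc.2
    have h2 : c.reverse.support.tail = c.support.tail.dropLast.reverse ++ [u] := by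
      rw [Walk.support_reverse]
      conv_lhs => rw [hs]
      simp
    rw [h2]
    generalize hl : c.support.tail.dropLast = l at hnd
    simp only [List.nodup_append, List.nodup_reverse, List.disjoint_singleton,
      List.mem_reverse] at hnd ⊢
    tauto

lemma cycle_walk_cases {u x : V} (c : G.Walk u u) (hc : c.IsCycle) (W : G.Walk u x)
    (hW : W.IsPath) (hx : x ≠ u) (hsub : ∀ e ∈ W.edges, e ∈ c.edges) :
    (∃ h : x ∈ c.support, W = c.takeUntil x h) ∨
      (∃ h : x ∈ c.reverse.support, W = c.reverse.takeUntil x h) := by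
  cases c with
  | nil => exact absurd hc.three_le_length (by simp)
  | @cons _ s _ h1 q =>
    cases W with
    | nil => exact absurd rfl hx
    | @cons _ w _ hW1 W' =>
      have he : s(u, w) ∈ (Walk.cons h1 q).edges := hsub _ (by simp)
      rw [Walk.edges_cons, List.mem_cons] at he
      rcases he with he | he
      · obtain rfl := Sym2.congr_right.mp he
        exact Or.inl (takeUntil_of_shared_first h1 (cycle_tail_path hc) hW hx hsub)
      · have he' : s(u, w) ∈ q.reverse.edges := by
          rw [Walk.edges_reverse, List.mem_reverse]; exact he
        obtain ⟨q₂, ha, hrev⟩ := eq_snd_of_edge q.reverse (cycle_tail_path hc).reverse he'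
        have hcr : (Walk.cons h1 q).reverse
            = Walk.cons ha (q₂.append (Walk.cons h1.symm Walk.nil)) := by
          rw [Walk.reverse_cons, hrev, Walk.cons_append]
        right
        rw [hcr]
        have hcyc : (Walk.cons ha (q₂.append (Walk.cons h1.symm Walk.nil))).IsCycle := by
          rw [← hcr]; exact isCycle_reverse hc
        refine takeUntil_of_shared_first ha (cycle_tail_path hcyc) hW hx ?_
        intro e heW
        have : e ∈ (Walk.cons h1 q).reverse.edges := by
          rw [Walk.edges_reverse, List.mem_reverse]; exact hsub e heW
        rwa [hcr] at this

lemma adj_of_length_one_s15 : ∀ {u v : V} (W : G.Walk u v), W.length = 1 → G.Adj u v := by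
  intro u v W h
  cases W with
  | nil => simp at h
  | cons ha q =>
    cases q with
    | nil => exact ha
    | cons hb q => simp [Walk.length_cons] at h

lemma edge_mem_of_length_one : ∀ {u v : V} (W : G.Walk u v), W.length = 1 → s(u, v) ∈ W.edges := by
  intro u v W h
  cases W with
  | nil => simp at h
  | cons ha q =>
    cases q with
    | nil => simp
    | cons hb q => simp [Walk.length_cons] at h

lemma exists_edge_of_pos {u v : V} (W : G.Walk u v) (h : 0 < W.length) :
    ∃ e, e ∈ W.edges := by
  have hne : W.edges ≠ [] := by
    intro he
    have h2 := W.length_edges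
    rw [he] at h2
    simp at h2
    omega
  exact List.exists_mem_of_ne_nil _ hne

lemma arc_paths {u x : V} {c : G.Walk u u} (hc : c.IsCycle) (hx : x ∈ c.support)
    (hne : x ≠ u) :
    (c.takeUntil x hx).IsPath ∧ (c.dropUntil x hx).IsPath ∧
      1 ≤ (c.takeUntil x hx).length ∧ 1 ≤ (c.dropUntil x hx).length ∧
      (c.takeUntil x hx).length + (c.dropUntil x hx).length = c.length := by
  set T := c.takeUntil x hx with hT
  set D := c.dropUntil x hx with hD
  have htd : T.append D = c := c.take_spec hx
  have hlen : T.length + D.length = c.length := by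
    have := congrArg Walk.length htd
    rwa [Walk.length_append] at this
  have hT1 : 1 ≤ T.length := by
    rcases Nat.eq_zero_or_pos T.length with h | h
    · exact absurd (Walk.eq_of_length_eq_zero h).symm hne
    · exact h
  have hD1 : 1 ≤ D.length := by
    rcases Nat.eq_zero_or_pos D.length with h | h
    · exact absurd (Walk.eq_of_length_eq_zero h) hne
    · exact h
  have hsupp : T.support ++ D.support.tail = c.support := by
    rw [← Walk.support_append, htd]
  have htails : T.support.tail ++ D.support.tail = c.support.tail := by
    have h1 : T.support = u :: T.support.tail := T.support_eq_cons
    have h2 : c.support = u :: c.support.tail := c.support_eq_cons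
    rw [h1, h2] at hsupp
    rw [List.cons_append, List.cons.injEq] at hsupp; exact hsupp.2
  have hnd : (T.support.tail ++ D.support.tail).Nodup := htails ▸ hc.2
  rw [List.nodup_append] at hnd
  obtain ⟨hndT, hndD, hdisj⟩ := hnd
  have hxT : x ∈ T.support.tail := by
    have : x ∈ T.support := Walk.end_mem_support T
    rw [T.support_eq_cons] at this
    exact (List.mem_cons.mp this).resolve_left hne
  have huD : u ∈ D.support.tail := by
    have h0 : u ∈ D.support := Walk.end_mem_support D
    rw [D.support_eq_cons] at h0
    rcases List.mem_cons.mp h0 with h | h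
    · exact absurd h.symm hne
    · exact h
  have hTpath : T.IsPath := by
    apply Walk.IsPath.mk'
    rw [T.support_eq_cons, List.nodup_cons]
    exact ⟨fun h => hdisj u h u huD rfl, hndT⟩
  have hDpath : D.IsPath := by
    apply Walk.IsPath.mk'
    rw [D.support_eq_cons, List.nodup_cons]
    exact ⟨fun h => hdisj x hxT x h rfl, hndD⟩
  exact ⟨hTpath, hDpath, hT1, hD1, hlen⟩

lemma takeUntil_reverse_length {u x : V} {c : G.Walk u u} (hc : c.IsCycle)
    (hx : x ∈ c.support) (hne : x ≠ u) (hx' : x ∈ c.reverse.support) :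
    (c.takeUntil x hx).length + (c.reverse.takeUntil x hx').length = c.length := by
  obtain ⟨hT, hD, hT1, hD1, hlen⟩ := arc_paths hc hx hne
  have hsub : ∀ e ∈ (c.dropUntil x hx).reverse.edges, e ∈ c.edges := by
    intro e he
    rw [Walk.edges_reverse, List.mem_reverse] at he
    exact c.edges_dropUntil_subset hx he
  rcases cycle_walk_cases c hc (c.dropUntil x hx).reverse hD.reverse hne hsub with
    ⟨h, heq⟩ | ⟨h, heq⟩
  · exfalso
    obtain ⟨e, he⟩ := exists_edge_of_pos (c.dropUntil x hx) hD1
    have heT : e ∈ (c.takeUntil x hx).edges := by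
      have h2 : c.takeUntil x hx = c.takeUntil x h := rfl
      rw [h2, ← heq, Walk.edges_reverse, List.mem_reverse]
      exact he
    have hndc : (c.takeUntil x hx).edges.Nodup ∧ ((c.dropUntil x hx).edges.Nodup ∧
        (c.takeUntil x hx).edges.Disjoint (c.dropUntil x hx).edges) := by
      have := hc.1.1.edges_nodup
      rw [← c.take_spec hx, Walk.edges_append, List.nodup_append] at this
      exact ⟨this.1, this.2.1, fun a ha hb => this.2.2 a ha a hb rfl⟩
    exact hndc.2.2 heT he
  · have : (c.reverse.takeUntil x hx').length = (c.dropUntil x hx).length := by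
      have h2 : c.reverse.takeUntil x hx' = c.reverse.takeUntil x h := rfl
      rw [h2, ← heq, Walk.length_reverse]
    omega

lemma two_paths {u x : V} (c : G.Walk u u) (hc : c.IsCycle) (hne : x ≠ u)
    (W₁ W₂ : G.Walk u x) (h₁ : W₁.IsPath) (h₂ : W₂.IsPath)
    (s₁ : ∀ e ∈ W₁.edges, e ∈ c.edges) (s₂ : ∀ e ∈ W₂.edges, e ∈ c.edges) :
    W₁ = W₂ ∨ W₁.length + W₂.length = c.length := by
  rcases cycle_walk_cases c hc W₁ h₁ hne s₁ with ⟨ha, e₁⟩ | ⟨ha, e₁⟩ <;>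
    rcases cycle_walk_cases c hc W₂ h₂ hne s₂ with ⟨hb, e₂⟩ | ⟨hb, e₂⟩
  · exact Or.inl (by rw [e₁, e₂])
  · exact Or.inr (by rw [e₁, e₂]; exact takeUntil_reverse_length hc ha hne hb)
  · exact Or.inr (by rw [e₁, e₂, Nat.add_comm]; exact takeUntil_reverse_length hc hb hne ha)
  · exact Or.inl (by rw [e₁, e₂])

lemma walk_length_rotate {r u : V} (c : G.Walk r r) (hu : u ∈ c.support) :
    (c.rotate u hu).length = c.length := by
  have h1 := congrArg Walk.length (c.take_spec hu)
  rw [Walk.length_append] at h1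
  show ((c.dropUntil u hu).append (c.takeUntil u hu)).length = c.length
  rw [Walk.length_append]
  omega

lemma two_paths_of_mem {r u x : V} (c : G.Walk r r) (hc : c.IsCycle) (hu : u ∈ c.support)
    (hne : x ≠ u) (W₁ W₂ : G.Walk u x) (h₁ : W₁.IsPath) (h₂ : W₂.IsPath)
    (s₁ : ∀ e ∈ W₁.edges, e ∈ c.edges) (s₂ : ∀ e ∈ W₂.edges, e ∈ c.edges) :
    W₁ = W₂ ∨ W₁.length + W₂.length = c.length := by
  have hrot : ∀ e, e ∈ (c.rotate u hu).edges ↔ e ∈ c.edges :=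
    fun e => (Walk.rotate_edges c u hu).mem_iff
  rcases two_paths (c.rotate u hu) (hc.rotate hu) hne W₁ W₂ h₁ h₂
      (fun e he => (hrot e).mpr (s₁ e he)) (fun e he => (hrot e).mpr (s₂ e he)) with h | h
  · exact Or.inl h
  · exact Or.inr (by rw [h, walk_length_rotate])

lemma arcs_inter {m : V} {c₂ : G.Walk m m} (hc : c₂.IsCycle) {p q : V}
    (hp : p ∈ c₂.support) (hq : q ∈ c₂.reverse.support) (hpm : p ≠ m) (hqm : q ≠ m)
    (hlen : (c₂.takeUntil p hp).length + (c₂.reverse.takeUntil q hq).length + 1 ≤ c₂.length) :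
    ∀ z, z ∈ (c₂.takeUntil p hp).support → z ∈ (c₂.reverse.takeUntil q hq).support → z = m := by
  intro z hzX hzY
  by_contra hzm
  set X := c₂.takeUntil p hp with hXdef
  set Y := c₂.reverse.takeUntil q hq with hYdef
  have hn3 : 3 ≤ c₂.length := hc.three_le_length
  set l := c₂.support.tail.dropLast with hldef
  have hs : c₂.support = m :: (l ++ [m]) := support_shape c₂ (by omega)
  have hslen : c₂.support.length = c₂.length + 1 := c₂.length_support
  have hllen : l.length = c₂.length - 1 := by
    rw [hs] at hslen
    simp at hslen
    omega
  have hndl : (l ++ [m]).Nodup := by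
    have h2 := hc.2
    have h3 : c₂.support.tail = l ++ [m] := by rw [hs]; rfl
    rwa [h3] at h2
  rw [List.nodup_append] at hndl
  obtain ⟨hnl, _, hdisjl⟩ := hndl
  have hml : m ∉ l := fun h => hdisjl m h m (by simp) rfl
  -- X is a prefix of the support
  have hXpre : X.support <+: c₂.support :=
    ⟨(c₂.dropUntil p hp).support.tail, by rw [← Walk.support_append, c₂.take_spec hp]⟩
  have hYpre : Y.support <+: c₂.reverse.support :=
    ⟨(c₂.reverse.dropUntil q hq).support.tail,
      by rw [← Walk.support_append, c₂.reverse.take_spec hq]⟩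
  have hXlen : X.support.length = X.length + 1 := X.length_support
  have hYlen : Y.support.length = Y.length + 1 := Y.length_support
  have hXb : X.length ≤ l.length := by omega
  have hYb : Y.length ≤ l.length := by omega
  have hXtake : X.support = m :: l.take X.length := by
    have := List.prefix_iff_eq_take.mp hXpre
    rw [hXlen, hs] at this
    rw [this, List.take_succ_cons, List.take_append_of_le_length hXb]
  have hrevs : c₂.reverse.support = m :: (l.reverse ++ [m]) := by
    rw [Walk.support_reverse, hs]
    simp
  have hYtake : Y.support = m :: l.reverse.take Y.length := by
    have := List.prefix_iff_eq_take.mp hYpre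
    rw [hYlen, hrevs] at this
    rw [this, List.take_succ_cons, List.take_append_of_le_length (by simpa using hYb)]
  have hzX' : z ∈ l.take X.length := by
    rw [hXtake] at hzX
    rcases List.mem_cons.mp hzX with h | h
    · exact absurd h hzm
    · exact h
  have hzY' : z ∈ l.reverse.take Y.length := by
    rw [hYtake] at hzY
    rcases List.mem_cons.mp hzY with h | h
    · exact absurd h hzm
    · exact h
  have hzdrop : z ∈ l.drop (l.length - Y.length) := by
    have h1 : z ∈ (l.reverse.take Y.length).reverse := by
      rwa [List.mem_reverse]
    rwa [List.reverse_take, List.reverse_reverse, List.length_reverse] at h1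
  exact (List.disjoint_take_drop hnl (by omega)) hzX' hzdrop

lemma first_edge_takeUntil {m : V} (c₂ : G.Walk m m) (h0 : 0 < c₂.length) :
    ∃ w, ∀ z (hz : z ∈ c₂.support), z ≠ m → s(m, w) ∈ (c₂.takeUntil z hz).edges := by
  cases c₂ with
  | nil => simp at h0
  | @cons _ s _ h1 q =>
    refine ⟨s, fun z hz hne => ?_⟩
    have hz' : z ∈ q.support := by
      rcases List.mem_cons.mp ((Walk.support_cons h1 q) ▸ hz) with h | h
      · exact absurd h hne
      · exact h
    rw [takeUntil_cons_ne h1 q hz (fun h => hne h.symm) hz']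
    simp

lemma takeUntil_reverse_reverse {m z : V} (c₂ : G.Walk m m)
    (hz : z ∈ c₂.reverse.reverse.support) (hz' : z ∈ c₂.support) :
    c₂.reverse.reverse.takeUntil z hz = c₂.takeUntil z hz' := by
  revert hz
  rw [Walk.reverse_reverse]
  intro hz
  rfl

lemma join_inter {r m p q : V} (c : G.Walk r r) (hc : c.IsCycle) (hm : m ∈ c.support)
    {X : G.Walk m p} {Y : G.Walk m q} (hX : X.IsPath) (hY : Y.IsPath)
    (sX : ∀ e ∈ X.edges, e ∈ c.edges) (sY : ∀ e ∈ Y.edges, e ∈ c.edges)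
    (hpm : p ≠ m) (hqm : q ≠ m)
    (hdisj : ∀ e ∈ X.edges, e ∉ Y.edges)
    (hlen : X.length + Y.length + 1 ≤ c.length) :
    ∀ z, z ∈ X.support → z ∈ Y.support → z = m := by
  set c₂ := c.rotate m hm with hc₂def
  have hc₂ : c₂.IsCycle := hc.rotate hm
  have hc₂len : c₂.length = c.length := walk_length_rotate c hm
  have hrot : ∀ e, e ∈ c₂.edges ↔ e ∈ c.edges := fun e => (Walk.rotate_edges c m hm).mem_iff
  have sX' : ∀ e ∈ X.edges, e ∈ c₂.edges := fun e he => (hrot e).mpr (sX e he)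
  have sY' : ∀ e ∈ Y.edges, e ∈ c₂.edges := fun e he => (hrot e).mpr (sY e he)
  have h3 : 3 ≤ c₂.length := hc₂.three_le_length
  rcases cycle_walk_cases c₂ hc₂ X hX hpm sX' with ⟨ha, e₁⟩ | ⟨ha, e₁⟩ <;>
    rcases cycle_walk_cases c₂ hc₂ Y hY hqm sY' with ⟨hb, e₂⟩ | ⟨hb, e₂⟩
  · -- both forward: they share the first edge of c₂
    exfalso
    obtain ⟨w, hw⟩ := first_edge_takeUntil c₂ (by omega)
    exact hdisj s(m, w) (e₁ ▸ hw p ha hpm) (e₂ ▸ hw q hb hqm)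
  · -- X forward, Y backward
    intro z hzX hzY
    exact arcs_inter hc₂ ha hb hpm hqm (by rw [← e₁, ← e₂]; omega) z
      (e₁ ▸ hzX) (e₂ ▸ hzY)
  · -- X backward, Y forward: use the reverse cycle
    intro z hzX hzY
    have hb' : q ∈ c₂.reverse.reverse.support := by rw [Walk.reverse_reverse]; exact hb
    have e₂' : Y = c₂.reverse.reverse.takeUntil q hb' :=
      e₂.trans (takeUntil_reverse_reverse c₂ hb' hb).symm
    exact arcs_inter (isCycle_reverse hc₂) ha hb' hpm hqm
      (by rw [← e₁, ← e₂', Walk.length_reverse]; omega) z (e₁ ▸ hzX) (e₂' ▸ hzY)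
  · -- both backward
    exfalso
    obtain ⟨w, hw⟩ := first_edge_takeUntil c₂.reverse (by rw [Walk.length_reverse]; omega)
    exact hdisj s(m, w) (e₁ ▸ hw p ha hpm) (e₂ ▸ hw q hb hqm)

lemma append_path_of_inter {a m b : V} {X : G.Walk a m} {Y : G.Walk m b}
    (hX : X.IsPath) (hY : Y.IsPath)
    (hint : ∀ z, z ∈ X.support → z ∈ Y.support → z = m) : (X.append Y).IsPath := by
  apply Walk.IsPath.mk'
  rw [Walk.support_append, List.nodup_append]
  refine ⟨hX.2, ?_, ?_⟩
  · have := hY.2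
    rw [Y.support_eq_cons] at this
    exact this.of_cons
  · intro z hz1 z' hz2 hzz
    subst hzz
    have hz2' : z ∈ Y.support := by
      rw [Y.support_eq_cons]
      exact List.mem_cons_of_mem _ hz2
    obtain rfl := hint z hz1 hz2'
    have := hY.2
    rw [Y.support_eq_cons, List.nodup_cons] at this
    exact this.1 hz2

lemma dropUntil_first {y z : V} (p : G.Walk y z) (h : y ∈ p.support) :
    p.dropUntil y h = p := by
  cases p with
  | nil => rfl
  | cons r p => simp [Walk.dropUntil]

lemma dropUntil_cons_ne {y u' z x : V} (r : G.Adj y u') (p : G.Walk u' z)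
    (hx : x ∈ (Walk.cons r p).support) (h : y ≠ x) (hx' : x ∈ p.support) :
    (Walk.cons r p).dropUntil x hx = p.dropUntil x hx' := by
  simp [Walk.dropUntil, dif_neg h]

lemma mem_dropUntil_or : ∀ {y z : V} (p : G.Walk y z) (x w : V) (hx : x ∈ p.support)
    (hw : w ∈ p.support),
    w ∈ (p.dropUntil x hx).support ∨ x ∈ (p.dropUntil w hw).support := by
  intro y z p
  induction p with
  | nil =>
    intro x w hx hw
    rw [Walk.mem_support_nil_iff] at hx hw
    subst hx; subst hw
    left
    exact Walk.start_mem_support _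
  | @cons y y' z ha q ih =>
    intro x w hx hw
    by_cases hxy : y = x
    · subst hxy
      left
      rw [dropUntil_first]
      exact hw
    · by_cases hwy : y = w
      · subst hwy
        right
        rw [dropUntil_first]
        exact hx
      · have hx' : x ∈ q.support := by
          rcases List.mem_cons.mp ((Walk.support_cons ha q) ▸ hx) with h | h
          · exact absurd h.symm hxy
          · exact h
        have hw' : w ∈ q.support := by
          rcases List.mem_cons.mp ((Walk.support_cons ha q) ▸ hw) with h | h
          · exact absurd h.symm hwy
          · exact h
        rw [dropUntil_cons_ne ha q hx hxy hx', dropUntil_cons_ne ha q hw hwy hw']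
        exact ih x w hx' hw'

lemma shortest_path_core {u v x y : V} {P : G.Walk u v} (hP : P.IsPath)
    (hmin : ∀ Q : G.Walk u v, P.length ≤ Q.length) (hadj : G.Adj x y)
    (hx : x ∈ P.support) (hy : y ∈ (P.dropUntil x hx).support) : s(x, y) ∈ P.edges := by
  set q := P.dropUntil x hx with hq
  have hsplit : (P.takeUntil x hx).append q = P := P.take_spec hx
  have hlenP : (P.takeUntil x hx).length + q.length = P.length := by
    have := congrArg Walk.length hsplit
    rwa [Walk.length_append] at this
  have hsplitq : (q.takeUntil y hy).append (q.dropUntil y hy) = q := q.take_spec hy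
  have hlenq : (q.takeUntil y hy).length + (q.dropUntil y hy).length = q.length := by
    have := congrArg Walk.length hsplitq
    rwa [Walk.length_append] at this
  have hW := hmin ((P.takeUntil x hx).append (Walk.cons hadj (q.dropUntil y hy)))
  rw [Walk.length_append, Walk.length_cons] at hW
  have hty : (q.takeUntil y hy).length ≤ 1 := by omega
  have hty0 : (q.takeUntil y hy).length ≠ 0 := by
    intro h0
    exact hadj.ne (Walk.eq_of_length_eq_zero h0)
  have h1 : (q.takeUntil y hy).length = 1 := by omega
  have := edge_mem_of_length_one _ h1
  exact P.edges_dropUntil_subset hx (q.edges_takeUntil_subset hy this)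

lemma shortest_path_induced {u v x y : V} {P : G.Walk u v} (hP : P.IsPath)
    (hmin : ∀ Q : G.Walk u v, P.length ≤ Q.length) (hadj : G.Adj x y)
    (hx : x ∈ P.support) (hy : y ∈ P.support) : s(x, y) ∈ P.edges := by
  rcases mem_dropUntil_or P x y hx hy with h | h
  · exact shortest_path_core hP hmin hadj hx h
  · rw [Sym2.eq_swap]
    exact shortest_path_core hP hmin hadj.symm hy h


lemma suppSet_eq_coe {u v : V} (w : G.Walk u v) : suppSet w = ↑w.support.toFinset := by
  ext x; simp [suppSet]

lemma suppSet_finite {u v : V} (w : G.Walk u v) : (suppSet w).Finite := by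
  rw [suppSet_eq_coe]
  exact (w.support.toFinset).finite_toSet

lemma ncard_suppSet_path {u v : V} {P : G.Walk u v} (hP : P.IsPath) :
    (suppSet P).ncard = P.length + 1 := by
  rw [suppSet_eq_coe, Set.ncard_coe_finset, List.toFinset_card_of_nodup hP.2,
    Walk.length_support]

lemma ncard_suppSet_cycle {u : V} {c : G.Walk u u} (hc : c.IsCycle) :
    (suppSet c).ncard = c.length := by
  have h3 : 3 ≤ c.length := hc.three_le_length
  obtain ⟨L, hL⟩ : ∃ L, c.support = u :: (L ++ [u]) := ⟨_, support_shape c (by omega)⟩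
  have htail : c.support.tail = L ++ [u] := by rw [hL]; rfl
  have hnd : (L ++ [u]).Nodup := htail ▸ hc.2
  have hset : suppSet c = ↑(L ++ [u]).toFinset := by
    ext x
    simp only [suppSet, Set.mem_setOf_eq, List.coe_toFinset]
    rw [hL]
    simp only [List.mem_cons, Set.mem_setOf_eq]
    constructor
    · rintro (rfl | h)
      · simp
      · exact h
    · exact Or.inr
  rw [hset, Set.ncard_coe_finset, List.toFinset_card_of_nodup hnd, List.length_append,
    List.length_singleton]
  have hls := c.length_support
  rw [hL, List.length_cons, List.length_append, List.length_singleton] at hls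
  omega

end AuxLemmas

section KeyLemma
open List
set_option linter.unusedSectionVars false
set_option linter.unusedVariables false
variable [DecidableEq V]

lemma key_lemma (G : SimpleGraph V) {r : V} (c : G.Walk r r)
    (hC : IsShortestEvenHole G c) (hgood : GoodHole G c)
    (a b : ℕ) (ha : 3 ≤ a) (hb : b ≤ 7) (hlen : c.length = 8 * a + b)
    {u₀ m w₀ : V} {A₁ : G.Walk u₀ m} {A₂ : G.Walk m w₀}
    (hA₁ : IsPathOf G c A₁) (hA₂ : IsPathOf G c A₂)
    (hA₁s : A₁.length = cycleDist G c u₀ m) (hA₂s : A₂.length = cycleDist G c m w₀)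
    (hdisj : ∀ e ∈ A₁.edges, e ∉ A₂.edges)
    (hval₁ : a ≤ A₁.length) (hval₂ : a ≤ A₂.length)
    (hsum : A₁.length + A₂.length ≤ 2 * a + (b + 3) / 4)
    {P₁ : G.Walk u₀ m} {P₂ : G.Walk m w₀}
    (hP₁ : IsShortestPath G P₁) (hP₂ : IsShortestPath G P₂) :
    IsInducedPathOn G u₀ w₀ (suppSet P₁ ∪ suppSet P₂) := by
  have hcyc : c.IsCycle := hC.1.1.1.1
  have hind : ∀ x y : V, x ∈ c.support → y ∈ c.support → G.Adj x y → s(x, y) ∈ c.edges :=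
    hC.1.1.1.2
  have hc3 : 3 ≤ c.length := hcyc.three_le_length
  have hdiv : (b + 3) / 4 ≤ 2 := by omega
  have hdA2 : A₁.length + A₂.length ≤ 2 * a + 2 := by omega
  have hA₁pos : 0 < A₁.length := by omega
  have hA₂pos : 0 < A₂.length := by omega
  have hu₀ : u₀ ∈ c.support := start_mem_of_edges_subset c A₁ hA₁pos hA₁.2
  have hm : m ∈ c.support := end_mem_of_edges_subset c A₁ hA₁pos hA₁.2
  have hw₀ : w₀ ∈ c.support := end_mem_of_edges_subset c A₂ hA₂pos hA₂.2
  have cycleDist_le : ∀ {x y : V} (W : G.Walk x y), W.IsPath →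
      (∀ e ∈ W.edges, e ∈ c.edges) → cycleDist G c x y ≤ W.length :=
    fun W h1 h2 => Nat.sInf_le ⟨W, ⟨h1, h2⟩, rfl⟩
  have hne₁ : u₀ ≠ m := by
    rintro rfl
    have h0 : cycleDist G c u₀ u₀ ≤ 0 := cycleDist_le Walk.nil Walk.IsPath.nil (by simp)
    rw [← hA₁s] at h0
    omega
  have hne₂ : m ≠ w₀ := by
    rintro rfl
    have h0 : cycleDist G c m m ≤ 0 := cycleDist_le Walk.nil Walk.IsPath.nil (by simp)
    rw [← hA₂s] at h0
    omega
  have hnadj₁ : ¬G.Adj u₀ m := by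
    intro hadj
    have he : s(u₀, m) ∈ c.edges := hind _ _ hu₀ hm hadj
    have h0 : cycleDist G c u₀ m ≤ 1 :=
      cycleDist_le (Walk.cons hadj Walk.nil) (by simp [hadj.ne]) (by simp [he])
    rw [← hA₁s] at h0
    omega
  have hP₁le : P₁.length ≤ A₁.length := hP₁.2 A₁
  have hP₂le : P₂.length ≤ A₂.length := hP₂.2 A₂
  -- u₀ ≠ w₀
  have hneuw : u₀ ≠ w₀ := by
    rintro rfl
    rcases two_paths_of_mem c hcyc hu₀ (Ne.symm hne₁) A₁ A₂.reverse hA₁.1 hA₂.1.reverse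
        hA₁.2 (fun e he => hA₂.2 e (by rwa [Walk.edges_reverse, List.mem_reverse] at he))
        with h | h
    · obtain ⟨e, he⟩ := exists_edge_of_pos A₁ hA₁pos
      refine hdisj e he ?_
      have h2 : e ∈ A₂.reverse.edges := h ▸ he
      rwa [Walk.edges_reverse, List.mem_reverse] at h2
    · rw [Walk.length_reverse] at h
      omega
  -- QA = A₁ ++ A₂ is a path of c
  have hQAint : ∀ z, z ∈ A₁.support → z ∈ A₂.support → z = m := by
    intro z hz1 hz2
    refine join_inter c hcyc hm (X := A₁.reverse) (Y := A₂) hA₁.1.reverse hA₂.1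
      (fun e he => hA₁.2 e (by rwa [Walk.edges_reverse, List.mem_reverse] at he)) hA₂.2
      hne₁ (Ne.symm hne₂)
      (fun e he h2 => hdisj e (by rwa [Walk.edges_reverse, List.mem_reverse] at he) h2)
      (by rw [Walk.length_reverse]; omega) z
      (by rwa [Walk.support_reverse, List.mem_reverse]) hz2
  have hQApath : (A₁.append A₂).IsPath := append_path_of_inter hA₁.1 hA₂.1 hQAint
  have hQAsub : ∀ e ∈ (A₁.append A₂).edges, e ∈ c.edges := by
    intro e he
    rw [Walk.edges_append, List.mem_append] at he
    rcases he with he | he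
    · exact hA₁.2 e he
    · exact hA₂.2 e he
  have hQAlen : (A₁.append A₂).length = A₁.length + A₂.length := Walk.length_append _ _
  -- u₀, w₀ are not adjacent
  have hnadjuw : ¬G.Adj u₀ w₀ := by
    intro hadj
    rcases two_paths_of_mem c hcyc hu₀ (Ne.symm hneuw) (A₁.append A₂)
        (Walk.cons hadj Walk.nil) hQApath (by simp [hadj.ne]) hQAsub
        (by simp [hind _ _ hu₀ hw₀ hadj]) with h | h
    · have h2 := congrArg Walk.length h
      rw [hQAlen] at h2
      simp at h2
      omega
    · rw [hQAlen] at h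
      simp [Walk.length_cons] at h
      omega
  -- all paths of c between u₀ and w₀ have length dA or ‖c‖ - dA
  have hpathlen : ∀ (W : G.Walk u₀ w₀), W.IsPath → (∀ e ∈ W.edges, e ∈ c.edges) →
      W.length = A₁.length + A₂.length ∨
        W.length + (A₁.length + A₂.length) = c.length := by
    intro W h1 h2
    rcases two_paths_of_mem c hcyc hu₀ (Ne.symm hneuw) (A₁.append A₂) W hQApath h1
        hQAsub h2 with h | h
    · left; rw [← h, hQAlen]
    · right; rw [hQAlen] at h; omega
  -- (†) : there is no u₀w₀-walk shorter than dA
  have hnoshort : ∀ (W : G.Walk u₀ w₀), A₁.length + A₂.length ≤ W.length := by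
    by_contra hcon
    push_neg at hcon
    obtain ⟨W, hW⟩ := hcon
    have hRpath : W.bypass.IsPath := W.bypass_isPath
    have hRlen : W.bypass.length ≤ W.length := W.length_bypass_le
    have hR2 : 2 ≤ W.bypass.length := by
      have h0 : W.bypass.length ≠ 0 := fun h => hneuw (Walk.eq_of_length_eq_zero h)
      have h1 : W.bypass.length ≠ 1 := fun h => hnadjuw (adj_of_length_one_s15 W.bypass h)
      omega
    have hcdlow : A₁.length + A₂.length ≤ cycleDist G c u₀ w₀ := by
      unfold cycleDist
      refine le_csInf ⟨(A₁.append A₂).length, (A₁.append A₂), ⟨hQApath, hQAsub⟩, rfl⟩ ?_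
      rintro n ⟨W', ⟨h1, h2⟩, rfl⟩
      rcases hpathlen W' h1 h2 with h | h <;> omega
    have hq4 : (b + 3) / 4 * 4 ≤ b + 3 := Nat.div_mul_le_self _ _
    have hcut : CShortcut G c W.bypass := ⟨hR2, by omega, by omega⟩
    obtain ⟨Q, hQ, r', w, hw, hsupp⟩ :=
      hgood u₀ w₀ W.bypass ⟨hRpath, hneuw, hnadjuw, hu₀, hw₀⟩ hcut
    have hwlen : w.length = c.length := le_antisymm (hw.2 r c hC.1) (hC.2 r' w hw.1)
    have hQlen : Q.length + (A₁.length + A₂.length) ≤ c.length := by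
      rcases hpathlen Q hQ.1 hQ.2 with h | h <;> omega
    have hwcard : (suppSet w).ncard = c.length := by
      rw [ncard_suppSet_cycle hw.1.1.1.1, hwlen]
    have hRcard : (suppSet W.bypass).ncard = W.bypass.length + 1 := ncard_suppSet_path hRpath
    have hQcard : (suppSet Q).ncard = Q.length + 1 := ncard_suppSet_path hQ.1
    have hfinR : (suppSet W.bypass).Finite := suppSet_finite _
    have hfinQ : (suppSet Q).Finite := suppSet_finite _
    have hsub2 : ({u₀, w₀} : Set V) ⊆ suppSet W.bypass ∩ suppSet Q := by
      intro x hx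
      rcases hx with rfl | hx
      · exact ⟨Walk.start_mem_support _, Walk.start_mem_support _⟩
      · rcases hx with rfl
        exact ⟨Walk.end_mem_support _, Walk.end_mem_support _⟩
    have hintcard : 2 ≤ (suppSet W.bypass ∩ suppSet Q).ncard := by
      have h2 := Set.ncard_le_ncard hsub2 (hfinR.inter_of_left _)
      rwa [Set.ncard_pair hneuw] at h2
    have hunion := Set.ncard_union_add_ncard_inter (suppSet W.bypass) (suppSet Q) hfinR hfinQ
    rw [← hsupp] at hunion
    omega
  -- ★ : P₁ and P₂ meet only in m
  have hstar : ∀ z, z ∈ P₁.support → z ∈ P₂.support → z = m := by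
    intro z hz1 hz2
    by_contra hzm
    have hd1 : (P₁.dropUntil z hz1).length ≠ 0 := fun h => hzm (Walk.eq_of_length_eq_zero h)
    have ht2 : (P₂.takeUntil z hz2).length ≠ 0 :=
      fun h => hzm (Walk.eq_of_length_eq_zero h).symm
    have hs1 : (P₁.takeUntil z hz1).length + (P₁.dropUntil z hz1).length = P₁.length := by
      have := congrArg Walk.length (P₁.take_spec hz1)
      rwa [Walk.length_append] at this
    have hs2 : (P₂.takeUntil z hz2).length + (P₂.dropUntil z hz2).length = P₂.length := by
      have := congrArg Walk.length (P₂.take_spec hz2)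
      rwa [Walk.length_append] at this
    have hns := hnoshort ((P₁.takeUntil z hz1).append (P₂.dropUntil z hz2))
    rw [Walk.length_append] at hns
    omega
  have hQspath : (P₁.append P₂).IsPath := append_path_of_inter hP₁.1 hP₂.1 hstar
  refine ⟨P₁.append P₂, hQspath, ?_, ?_⟩
  · ext x
    simp only [suppSet, Set.mem_setOf_eq, Set.mem_union, Walk.mem_support_append_iff]
  · intro x y hx hy hadj
    rw [Walk.edges_append, List.mem_append]
    have hmix : ∀ x' y', x' ∈ P₁.support → y' ∈ P₂.support → x' ∉ P₂.support →
        y' ∉ P₁.support → ¬G.Adj x' y' := by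
      intro x' y' hx1 hy2 hx2 hy1 hadj'
      have hxm : x' ≠ m := fun h => hx2 (h ▸ P₂.start_mem_support)
      have hym : y' ≠ m := fun h => hy1 (h ▸ P₁.end_mem_support)
      have hd1 : (P₁.dropUntil x' hx1).length ≠ 0 :=
        fun h => hxm (Walk.eq_of_length_eq_zero h)
      have ht2 : (P₂.takeUntil y' hy2).length ≠ 0 :=
        fun h => hym (Walk.eq_of_length_eq_zero h).symm
      have hs1 : (P₁.takeUntil x' hx1).length + (P₁.dropUntil x' hx1).length = P₁.length := by
        have := congrArg Walk.length (P₁.take_spec hx1)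
        rwa [Walk.length_append] at this
      have hs2 : (P₂.takeUntil y' hy2).length + (P₂.dropUntil y' hy2).length = P₂.length := by
        have := congrArg Walk.length (P₂.take_spec hy2)
        rwa [Walk.length_append] at this
      have hns := hnoshort
        ((P₁.takeUntil x' hx1).append (Walk.cons hadj' (P₂.dropUntil y' hy2)))
      rw [Walk.length_append, Walk.length_cons] at hns
      omega
    have hx' : x ∈ P₁.support ∨ x ∈ P₂.support := by
      simpa only [suppSet, Set.mem_union, Set.mem_setOf_eq] using hx
    have hy' : y ∈ P₁.support ∨ y ∈ P₂.support := by
      simpa only [suppSet, Set.mem_union, Set.mem_setOf_eq] using hy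
    rcases hx' with hx1 | hx2 <;> rcases hy' with hy1 | hy2
    · exact Or.inl (shortest_path_induced hP₁.1 hP₁.2 hadj hx1 hy1)
    · by_cases hx2 : x ∈ P₂.support
      · exact Or.inr (shortest_path_induced hP₂.1 hP₂.2 hadj hx2 hy2)
      · by_cases hy1 : y ∈ P₁.support
        · exact Or.inl (shortest_path_induced hP₁.1 hP₁.2 hadj hx1 hy1)
        · exact absurd hadj (hmix x y hx1 hy2 hx2 hy1)
    · by_cases hx1 : x ∈ P₁.support
      · exact Or.inl (shortest_path_induced hP₁.1 hP₁.2 hadj hx1 hy1)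
      · by_cases hy2 : y ∈ P₂.support
        · exact Or.inr (shortest_path_induced hP₂.1 hP₂.2 hadj hx2 hy2)
        · exact absurd hadj.symm (hmix y x hy1 hx2 hy2 hx1)
    · exact Or.inr (shortest_path_induced hP₂.1 hP₂.2 hadj hx2 hy2)

end KeyLemma

theorem stmt15 (G : SimpleGraph V) {r : V} (c : G.Walk r r)
    (hC : IsShortestEvenHole G c) (hgood : GoodHole G c)
    (a b : ℕ) (ha : 3 ≤ a) (hb : b ≤ 7) (hlen : c.length = 8 * a + b)
    (v : ZMod 8 → V) (A : ∀ i : ZMod 8, G.Walk (v i) (v (i + 1)))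
    (hA : ∀ i, IsPathOf G c (A i))
    (hAshort : ∀ i, (A i).length = cycleDist G c (v i) (v (i + 1)))
    (hdisj : ∀ i j, i ≠ j → ∀ e ∈ (A i).edges, e ∉ (A j).edges)
    (hval : ∀ i, (A i).length = a ∨ (A i).length = a + 1)
    (hsum : ∀ i, (A i).length + (A (i + 1)).length ≤ 2 * a + (b + 3) / 4)
    (P : ∀ i : ZMod 8, G.Walk (v i) (v (i + 1)))
    (hP : ∀ i, IsShortestPath G (P i)) :
    ∀ i : ZMod 8,
      IsInducedPathOn G (v i) (v (i + 2)) (suppSet (P i) ∪ suppSet (P (i + 1))) := by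
  classical
  intro i
  have e : i + 1 + 1 = i + 2 := by ring
  have hne : i ≠ i + 1 := by
    intro h
    have h2 : (1 : ZMod 8) = 0 := by
      have h3 := congrArg (fun t => t - i) h
      simpa [sub_eq_iff_eq_add, add_comm] using h3.symm
    exact absurd h2 (by decide)
  have hval₁ : a ≤ (A i).length := by rcases hval i with h | h <;> omega
  have hval₂ : a ≤ (A (i + 1)).length := by rcases hval (i + 1) with h | h <;> omega
  rw [← e]
  exact key_lemma G c hC hgood a b ha hb hlen (hA i) (hA (i + 1)) (hAshort i)
    (hAshort (i + 1)) (hdisj i (i + 1) hne) hval₁ hval₂ (hsum i) (hP i) (hP (i + 1))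
end
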